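/- arXiv:2108.11424 — 4 statements merged into one kernel-verified Lean document; each statement's English description precedes it below -/
import Mathlib

section
/- Let 𝐏 be a probability measure on environments on ℤ² satisfying (C1), (C2), and (C3), and let ℓ be a unit vector in ℝ². Then P⁰(T_{<0} = ∞) ≤ P⁰(B_ℓ) ≤ P⁰(A_ℓ), and consequently P⁰(A_ℓ) > 0 if and only if P⁰(B_ℓ) > 0. -/
open MeasureTheory ProbabilityTheory Filter Topology

noncomputable section

/-- Vertices of `ℤ^d`. -/
abbrev Zd (d : ℕ) := Fin d → ℤ

/-- Trajectories of a walk on `ℤ^d`. -/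
abbrev Traj (d : ℕ) := ℕ → Zd d

/-- Embedding of `ℤ^d` into Euclidean `ℝ^d`. -/
def toE {d : ℕ} (x : Zd d) : EuclideanSpace ℝ (Fin d) := WithLp.toLp 2 (fun i => (x i : ℝ))

/-- Dot product of a lattice point with a real vector. -/
def dotl {d : ℕ} (x : Zd d) (ℓ : EuclideanSpace ℝ (Fin d)) : ℝ := ∑ i, (x i : ℝ) * ℓ i

/-- The space of environments on `ℤ^d`. -/
abbrev EnvSp (d : ℕ) :=
  {ω : Zd d → Zd d → ℝ // (∀ x y, 0 ≤ ω x y) ∧ ∀ x, HasSum (ω x) 1}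

/-- `κ x ω` is the quenched law `P_ω^x` of the walk started at `x` in the environment `ω`,
characterized by its cylinder probabilities. -/
def IsQuenched {d : ℕ} (κ : Zd d → Kernel (EnvSp d) (Traj d)) : Prop :=
  ∀ (x : Zd d) (ω : EnvSp d) (n : ℕ) (p : ℕ → Zd d),
    (κ x) ω {X | ∀ i ≤ n, X i = p i} =
      (if p 0 = x then 1 else 0) *
        ∏ i ∈ Finset.range n, ENNReal.ofReal (ω.1 (p i) (p (i + 1)))

/-- The annealed law `P^x`. -/
def ann {d : ℕ} (P : Measure (EnvSp d)) (κ : Zd d → Kernel (EnvSp d) (Traj d))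
    (x : Zd d) : Measure (Traj d) :=
  P.bind fun ω => (κ x) ω

/-- The annealed law `P^{a,b}` of two walks moving independently in a common environment. -/
def annPair {d : ℕ} (P : Measure (EnvSp d)) (κ : Zd d → Kernel (EnvSp d) (Traj d))
    (a b : Zd d) : Measure (Traj d × Traj d) :=
  P.bind fun ω => ((κ a) ω).prod ((κ b) ω)

/-- (C1): the transition probability vectors at the various sites are i.i.d. -/
def CondC1 {d : ℕ} (P : Measure (EnvSp d)) : Prop :=
  iIndepFun
    (fun x (ω : EnvSp d) => fun y : Zd d => ω.1 x (x + y)) P ∧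
  ∀ x : Zd d,
    IdentDistrib (fun ω : EnvSp d => fun y : Zd d => ω.1 x (x + y))
      (fun ω : EnvSp d => fun y : Zd d => ω.1 0 (0 + y)) P P

/-- (C2): jumps are bounded by `R`. -/
def CondC2 {d : ℕ} (P : Measure (EnvSp d)) (R : ℝ) : Prop :=
  0 < R ∧ ∀ᵐ ω ∂P, ∀ x y : Zd d, R < ‖toE x - toE y‖ → ω.1 x y = 0

/-- (C3): a generating set of steps that are a.s. available. -/
def CondC3 {d : ℕ} (P : Measure (EnvSp d)) : Prop :=
  ∃ N : Set (Zd d), AddSubmonoid.closure N = ⊤ ∧ ∀ y ∈ N, P {ω | 0 < ω.1 0 y} = 1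

/-- The event `A_ℓ` of transience in direction `ℓ`. -/
def Adir {d : ℕ} (ℓ : EuclideanSpace ℝ (Fin d)) : Set (Traj d) :=
  {X | Tendsto (fun n => dotl (X n) ℓ) atTop atTop}

/-- The event `A_{-ℓ}`. -/
def AdirNeg {d : ℕ} (ℓ : EuclideanSpace ℝ (Fin d)) : Set (Traj d) :=
  {X | Tendsto (fun n => dotl (X n) ℓ) atTop atBot}

/-- First hitting time of a set, valued in `ℕ∞`. -/
def hitTime {α : Type*} (A : Set α) (X : ℕ → α) : ℕ∞ :=
  ⨅ (k : ℕ) (_ : X k ∈ A), (k : ℕ∞)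

/-- `T_{<a}` (with respect to direction `ℓ`). -/
def Tlt {d : ℕ} (ℓ : EuclideanSpace ℝ (Fin d)) (a : ℝ) : Traj d → ℕ∞ :=
  hitTime {x | dotl x ℓ < a}

/-- `T_{≤a}`. -/
def Tle {d : ℕ} (ℓ : EuclideanSpace ℝ (Fin d)) (a : ℝ) : Traj d → ℕ∞ :=
  hitTime {x | dotl x ℓ ≤ a}

/-- `T_{>a}`. -/
def Tgt {d : ℕ} (ℓ : EuclideanSpace ℝ (Fin d)) (a : ℝ) : Traj d → ℕ∞ :=
  hitTime {x | a < dotl x ℓ}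

/-- `T_{≥a}`. -/
def Tge {d : ℕ} (ℓ : EuclideanSpace ℝ (Fin d)) (a : ℝ) : Traj d → ℕ∞ :=
  hitTime {x | a ≤ dotl x ℓ}

/-- `Y` is obtained from `X` by erasing a single loop. -/
def EraseOne {α : Type*} (X Y : ℕ → α) : Prop :=
  ∃ m n : ℕ, m < n ∧ X m = X n ∧ Y = fun i => if i < m then X i else X (i + (n - m))

/-- `ℰ(X)`: all paths obtained from `X` by erasing finitely many loops in any order. -/
def LoopErasures {α : Type*} (X : ℕ → α) : Set (ℕ → α) :=
  {Y | Relation.ReflTransGen EraseOne X Y}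

/-- The event `B_ℓ`. -/
def Bdir {d : ℕ} (ℓ : EuclideanSpace ℝ (Fin d)) : Set (Traj d) :=
  {X | ∃ Y ∈ LoopErasures X, Tlt ℓ 0 Y = ⊤}

/-- The path `X` stopped at the (possibly infinite) time `T`;
for `n ≥ T` it stays at `X_T`. -/
def stopped {α : Type*} (X : ℕ → α) (T : ℕ∞) : ℕ → α :=
  fun n => if (n : ℕ∞) < T then X n else X T.toNat

/-- The event `G_a^b` (for `a < b` it uses `T_{≥b}`, for `a > b` it uses `T_{≤b}`). -/
def Gset {d : ℕ} (ℓ : EuclideanSpace ℝ (Fin d)) (a b : ℝ) : Set (Traj d) :=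
  if a < b then
    {X | Tge ℓ b X ≠ ⊤ ∧
      ∃ Y ∈ LoopErasures (stopped X (Tge ℓ b X)), Tge ℓ b Y < Tlt ℓ a Y}
  else
    {X | Tle ℓ b X ≠ ⊤ ∧
      ∃ Y ∈ LoopErasures (stopped X (Tle ℓ b X)), Tle ℓ b Y < Tgt ℓ a Y}




open scoped ENNReal

namespace ZOaux

variable {d : ℕ}

lemma zd_measurableSet (s : Set (Zd d)) : MeasurableSet s :=
  (Set.to_countable s).measurableSet

/-- cylinder of length `m`. -/
def cyl (m : ℕ) (w : ℕ → Zd d) : Set (Traj d) := {X | ∀ i ≤ m, X i = w i}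

lemma measurableSet_evalMem (m : ℕ) (s : Set (Zd d)) :
    MeasurableSet {X : Traj d | X m ∈ s} :=
  (measurable_pi_apply m) (zd_measurableSet s)

lemma measurableSet_cyl (m : ℕ) (w : ℕ → Zd d) : MeasurableSet (cyl m w) := by
  have h : cyl m w = ⋂ i ∈ Finset.range (m+1), {X : Traj d | X i ∈ ({w i} : Set (Zd d))} := by
    ext X; simp [cyl, Nat.lt_succ_iff]
  rw [h]
  exact Finset.measurableSet_biInter _ fun i _ => measurableSet_evalMem i {w i}

/-- normalized prefix of length `m`. -/
def IsPref (m : ℕ) (w : ℕ → Zd d) : Prop := ∀ i, w i = w (min i m)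

def trunc (m : ℕ) (X : Traj d) : ℕ → Zd d := fun i => X (min i m)

lemma isPref_trunc (m : ℕ) (X : Traj d) : IsPref m (trunc m X) := by
  intro i; simp [trunc, min_assoc]

lemma trunc_eq_of_le {m i : ℕ} (X : Traj d) (h : i ≤ m) : trunc m X i = X i := by
  simp [trunc, min_eq_left h]

lemma mem_cyl_trunc (m : ℕ) (X : Traj d) : X ∈ cyl m (trunc m X) := by
  intro i hi; exact (trunc_eq_of_le X hi).symm

lemma cyl_disjoint {m : ℕ} {w w' : ℕ → Zd d} (h1 : IsPref m w) (h2 : IsPref m w')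
    (hne : w ≠ w') : Disjoint (cyl m w) (cyl m w') := by
  rw [Set.disjoint_left]
  intro X hX hX' 
  apply hne
  funext i
  rw [h1 i, h2 i, ← hX (min i m) (min_le_right _ _), ← hX' (min i m) (min_le_right _ _)]

lemma countable_isPref (m : ℕ) : {w : ℕ → Zd d | IsPref m w}.Countable := by
  have h : {w : ℕ → Zd d | IsPref m w} ⊆
      Set.range (fun (v : Fin (m+1) → Zd d) (i : ℕ) =>
        v ⟨min i m, Nat.lt_succ_of_le (min_le_right _ _)⟩) := by
    intro w hw
    refine ⟨fun j => w j, ?_⟩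
    funext i
    exact (hw i).symm
  exact (Set.countable_range _).mono h

lemma eq_pref_of_mem_cyl {m : ℕ} {w : ℕ → Zd d} {X : Traj d} (hp : IsPref m w)
    (hX : X ∈ cyl m w) : w = trunc m X := by
  funext i
  rw [hp i, trunc]
  exact (hX (min i m) (min_le_right _ _)).symm


/-! ### Abstract conditional Borel-Cantelli -/

section BC

variable (step : Zd d) (Q : ℕ → Traj d → Prop) (N : ℕ)

open scoped Classical in
/-- number of qualifying indices in `[N, m)`. -/
def qcount (m : ℕ) (X : Traj d) : ℕ :=
  ((Finset.range m).filter fun n => N ≤ n ∧ Q n X).card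

def allFail (m : ℕ) (X : Traj d) : Prop :=
  ∀ n, n < m → N ≤ n → Q n X → X (n+1) ≠ X n + step

def PieceSet (j : ℕ) : Set (ℕ × (ℕ → Zd d)) :=
  {p | IsPref p.1 p.2 ∧ N ≤ p.1 ∧ Q p.1 p.2 ∧ qcount Q N p.1 p.2 = j ∧
    allFail step Q N p.1 p.2}

def FevSet (j : ℕ) : Set (Traj d) :=
  ⋃ p : PieceSet step Q N j,
    cyl p.1.1 p.1.2 ∩ {X | X (p.1.1 + 1) ≠ p.1.2 p.1.1 + step}

def BadSet : Set (Traj d) := ⋃ N, ⋂ j, FevSet step Q N j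

variable {step Q N}
variable (hQ : ∀ m (X Y : Traj d), (∀ i ≤ m, X i = Y i) → Q m X → Q m Y)

section transfer
variable {m : ℕ} {X Y : Traj d} (hag : ∀ i ≤ m, X i = Y i)
include hQ hag

lemma Q_transfer {n : ℕ} (hn : n ≤ m) : Q n X ↔ Q n Y :=
  ⟨hQ n X Y (fun i hi => hag i (hi.trans hn)),
   hQ n Y X (fun i hi => (hag i (hi.trans hn)).symm)⟩

lemma qcount_transfer {m' : ℕ} (hm' : m' ≤ m) : qcount Q N m' X = qcount Q N m' Y := by
  classical
  unfold qcount
  congr 1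
  apply Finset.filter_congr
  intro n hn
  rw [Finset.mem_range] at hn
  have := Q_transfer hQ hag (le_trans (Nat.le_of_lt hn) hm')
  simp [this]

lemma allFail_transfer {m' : ℕ} (hm' : m' ≤ m) :
    allFail step Q N m' X ↔ allFail step Q N m' Y := by
  unfold allFail
  constructor <;> intro h n hn hNn hq
  · have h1 : n ≤ m := le_trans (Nat.le_of_lt hn) hm'
    have h2 : n + 1 ≤ m := le_trans hn hm'
    rw [← hag n h1, ← hag (n+1) h2]
    exact h n hn hNn ((Q_transfer hQ hag h1).2 hq)
  · have h1 : n ≤ m := le_trans (Nat.le_of_lt hn) hm'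
    have h2 : n + 1 ≤ m := le_trans hn hm'
    rw [hag n h1, hag (n+1) h2]
    exact h n hn hNn ((Q_transfer hQ hag h1).1 hq)

end transfer

lemma countable_PieceSet (j : ℕ) : (PieceSet step Q N j).Countable := by
  have h : (PieceSet step Q N j) ⊆ ⋃ m : ℕ, (fun w => (m, w)) '' {w | IsPref m w} := by
    rintro ⟨m, w⟩ hp
    exact Set.mem_iUnion.2 ⟨m, ⟨w, hp.1, rfl⟩⟩
  exact (Set.countable_iUnion fun m => (countable_isPref m).image _).mono h

include hQ in
/-- the cylinders belonging to distinct pieces are disjoint. -/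
lemma piece_cyl_disjoint (j : ℕ) {p p' : ℕ × (ℕ → Zd d)}
    (hp : p ∈ PieceSet step Q N j) (hp' : p' ∈ PieceSet step Q N j) (hne : p ≠ p') :
    Disjoint (cyl p.1 p.2) (cyl p'.1 p'.2) := by
  classical
  obtain ⟨m, w⟩ := p
  obtain ⟨m', w'⟩ := p'
  rcases lt_trichotomy m m' with hmm | hmm | hmm
  · -- m < m' : no common point
    rw [Set.disjoint_left]
    intro X hX hX'
    -- qcount at m' of X is j, but filter contains m and all of filter at m
    have hagX : ∀ i ≤ m, X i = w i := hX
    have hagX' : ∀ i ≤ m', X i = w' i := hX'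
    have hq : qcount Q N m' X = j := by
      rw [qcount_transfer hQ hagX' le_rfl]; exact hp'.2.2.2.1
    have hQmX : Q m X := (Q_transfer hQ hagX le_rfl).2 hp.2.2.1
    have hsub : insert m ((Finset.range m).filter fun n => N ≤ n ∧ Q n X) ⊆
        (Finset.range m').filter fun n => N ≤ n ∧ Q n X := by
      intro n hn
      rcases Finset.mem_insert.1 hn with rfl | hn
      · exact Finset.mem_filter.2 ⟨Finset.mem_range.2 hmm, hp.2.1, hQmX⟩
      · rw [Finset.mem_filter] at hn ⊢
        exact ⟨Finset.mem_range.2 (lt_trans (Finset.mem_range.1 hn.1) hmm), hn.2⟩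
    have hcard := Finset.card_le_card hsub
    rw [Finset.card_insert_of_notMem (fun hc => by
      simpa using Finset.mem_range.1 (Finset.filter_subset _ _ hc))] at hcard
    have hqm : qcount Q N m X = j := by
      rw [qcount_transfer hQ hagX le_rfl]; exact hp.2.2.2.1
    unfold qcount at hqm hq
    omega
  · subst hmm
    have hwne : w ≠ w' := fun hw => hne (by simp [hw])
    exact cyl_disjoint hp.1 hp'.1 hwne
  · rw [disjoint_comm, Set.disjoint_left]
    intro X hX' hX
    have hagX : ∀ i ≤ m, X i = w i := hX
    have hagX' : ∀ i ≤ m', X i = w' i := hX'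
    have hq : qcount Q N m X = j := by
      rw [qcount_transfer hQ hagX le_rfl]; exact hp.2.2.2.1
    have hQmX : Q m' X := (Q_transfer hQ hagX' le_rfl).2 hp'.2.2.1
    have hsub : insert m' ((Finset.range m').filter fun n => N ≤ n ∧ Q n X) ⊆
        (Finset.range m).filter fun n => N ≤ n ∧ Q n X := by
      intro n hn
      rcases Finset.mem_insert.1 hn with rfl | hn
      · exact Finset.mem_filter.2 ⟨Finset.mem_range.2 hmm, hp'.2.1, hQmX⟩
      · rw [Finset.mem_filter] at hn ⊢
        exact ⟨Finset.mem_range.2 (lt_trans (Finset.mem_range.1 hn.1) hmm), hn.2⟩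
    have hcard := Finset.card_le_card hsub
    rw [Finset.card_insert_of_notMem (fun hc => by
      simpa using Finset.mem_range.1 (Finset.filter_subset _ _ hc))] at hcard
    have hqm : qcount Q N m' X = j := by
      rw [qcount_transfer hQ hagX' le_rfl]; exact hp'.2.2.2.1
    unfold qcount at hqm hq
    omega

lemma measurableSet_FevSet (j : ℕ) : MeasurableSet (FevSet step Q N j) := by
  have : Countable (PieceSet step Q N j) := (countable_PieceSet j).to_subtype
  exact MeasurableSet.iUnion fun p =>
    (measurableSet_cyl _ _).inter (measurableSet_evalMem (p.1.1+1) {p.1.2 p.1.1 + step}).compl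

lemma measurableSet_BadSet : MeasurableSet (BadSet step Q) :=
  MeasurableSet.iUnion fun _ => MeasurableSet.iInter fun _ => measurableSet_FevSet _


end BC

section BC2
variable {step : Zd d} {Q : ℕ → Traj d → Prop} {N : ℕ}
variable (hQ : ∀ m (X Y : Traj d), (∀ i ≤ m, X i = Y i) → Q m X → Q m Y)


variable (μ : Measure (Traj d)) [IsProbabilityMeasure μ] (ε : ℝ≥0∞)

include hQ in
lemma measure_FevSet_le
    (H : ∀ m (w : ℕ → Zd d), IsPref m w → Q m w →
      ε * μ (cyl m w) ≤ μ (cyl m w ∩ {X | X (m+1) = w m + step})) (j : ℕ) :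
    μ (FevSet step Q N j) ≤ (1 - ε) * μ (⋃ p : PieceSet step Q N j, cyl p.1.1 p.1.2) := by
  have : Countable (PieceSet step Q N j) := (countable_PieceSet j).to_subtype
  have hdisj : Pairwise (Function.onFun Disjoint
      (fun p : PieceSet step Q N j => cyl p.1.1 p.1.2)) := by
    intro p p' hne
    exact piece_cyl_disjoint hQ j p.2 p'.2 (fun h => hne (Subtype.ext h))
  have hdisj2 : Pairwise (Function.onFun Disjoint
      (fun p : PieceSet step Q N j =>
        cyl p.1.1 p.1.2 ∩ {X | X (p.1.1 + 1) ≠ p.1.2 p.1.1 + step})) := by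
    intro p p' hne
    exact ((hdisj hne).mono Set.inter_subset_left Set.inter_subset_left)
  rw [FevSet, measure_iUnion hdisj2 (fun p =>
    (measurableSet_cyl _ _).inter
      (measurableSet_evalMem (p.1.1+1) {p.1.2 p.1.1 + step}).compl),
    measure_iUnion hdisj (fun p => measurableSet_cyl _ _), ← ENNReal.tsum_mul_left]
  apply ENNReal.tsum_le_tsum
  intro p
  obtain ⟨⟨m, w⟩, hp⟩ := p
  simp only
  -- per-cylinder estimate
  have heqm : MeasurableSet {X : Traj d | X (m+1) = w m + step} :=
    measurableSet_evalMem (m+1) {w m + step}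
  have hsplit := measure_inter_add_diff (μ := μ) (cyl m w) heqm
  have hdiff : cyl m w ∩ {X | X (m + 1) ≠ w m + step} =
      cyl m w \ {X : Traj d | X (m+1) = w m + step} := rfl
  rw [hdiff]
  have hH := H m w hp.1 hp.2.2.1
  have h1 : μ (cyl m w \ {X : Traj d | X (m+1) = w m + step}) ≤
      μ (cyl m w) - ε * μ (cyl m w) := by
    apply ENNReal.le_sub_of_add_le_left (ne_top_of_le_ne_top (measure_ne_top μ _) hH)
    calc ε * μ (cyl m w) + μ (cyl m w \ {X : Traj d | X (m+1) = w m + step})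
        ≤ μ (cyl m w ∩ {X : Traj d | X (m+1) = w m + step}) +
          μ (cyl m w \ {X : Traj d | X (m+1) = w m + step}) := by
          gcongr
      _ = μ (cyl m w) := hsplit
  refine h1.trans ?_
  rw [ENNReal.sub_mul (fun _ _ => measure_ne_top μ _), one_mul]

include hQ in
lemma union_cyl_subset_FevSet (j : ℕ) :
    (⋃ p : PieceSet step Q N (j+1), cyl p.1.1 p.1.2) ⊆ FevSet step Q N j := by
  classical
  rintro X hX
  rw [Set.mem_iUnion] at hX
  obtain ⟨⟨⟨m, w⟩, hp⟩, hXc⟩ := hX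
  simp only at hXc
  set F := (Finset.range m).filter (fun n => N ≤ n ∧ Q n w) with hF
  have hcard : F.card = j + 1 := hp.2.2.2.1
  have hne : F.Nonempty := Finset.card_pos.1 (by omega)
  set m' := F.max' hne with hm'
  have hm'F : m' ∈ F := F.max'_mem hne
  have hm'lt : m' < m := Finset.mem_range.1 (Finset.mem_filter.1 hm'F).1
  have hNm' : N ≤ m' := (Finset.mem_filter.1 hm'F).2.1
  have hQm'w : Q m' w := (Finset.mem_filter.1 hm'F).2.2
  set w' := trunc m' w with hw'
  have hagw : ∀ i ≤ m', w i = w' i := fun i hi => (trunc_eq_of_le w hi).symm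
  -- (m', w') is a piece of level j
  have hqc : qcount Q N m' w = j := by
    have hfe : (Finset.range m').filter (fun n => N ≤ n ∧ Q n w) = F.erase m' := by
      ext n
      simp only [Finset.mem_filter, Finset.mem_range, Finset.mem_erase, hF]
      constructor
      · rintro ⟨hn, h2⟩
        exact ⟨Nat.ne_of_lt hn, lt_trans hn hm'lt, h2⟩
      · rintro ⟨hne2, hn, h2⟩
        refine ⟨lt_of_le_of_ne (F.le_max' n ?_) hne2, h2⟩
        exact Finset.mem_filter.2 ⟨Finset.mem_range.2 hn, h2⟩
    unfold qcount
    rw [hfe, Finset.card_erase_of_mem hm'F, hcard]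
    omega
  have hpiece : (m', w') ∈ PieceSet step Q N j := by
    refine ⟨isPref_trunc m' w, hNm', ?_, ?_, ?_⟩
    · exact hQ m' w w' hagw hQm'w
    · rw [← qcount_transfer hQ hagw le_rfl]
      exact hqc
    · rw [← allFail_transfer hQ hagw le_rfl]
      intro n hn hNn hq
      exact hp.2.2.2.2 n (lt_trans hn hm'lt) hNn hq
  rw [FevSet, Set.mem_iUnion]
  refine ⟨⟨(m', w'), hpiece⟩, ?_, ?_⟩
  · intro i hi
    rw [hXc i (le_trans hi (le_of_lt hm'lt)), hagw i hi]
  · -- failure at m'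
    simp only [Set.mem_setOf_eq]
    have hfail := hp.2.2.2.2 m' hm'lt hNm' hQm'w
    rw [hXc (m'+1) hm'lt, ← hagw m' le_rfl]
    exact hfail

include hQ in
lemma measure_FevSet_pow
    (hε1 : ε ≤ 1)
    (H : ∀ m (w : ℕ → Zd d), IsPref m w → Q m w →
      ε * μ (cyl m w) ≤ μ (cyl m w ∩ {X | X (m+1) = w m + step})) (j : ℕ) :
    μ (FevSet step Q N j) ≤ (1 - ε) ^ (j + 1) := by
  induction j with
  | zero =>
    refine (measure_FevSet_le hQ μ ε H 0).trans ?_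
    rw [pow_one]
    exact mul_le_of_le_one_right zero_le (le_trans (measure_mono (Set.subset_univ _)) (by simp))
  | succ j ih =>
    refine (measure_FevSet_le hQ μ ε H (j+1)).trans ?_
    rw [pow_succ, mul_comm ((1-ε)^(j+1)) (1-ε)]
    exact mul_le_mul_right (le_trans (measure_mono (union_cyl_subset_FevSet hQ (j := j))) ih) _

include hQ in
lemma measure_BadSet_null (hε0 : 0 < ε) (hε1 : ε ≤ 1)
    (H : ∀ m (w : ℕ → Zd d), IsPref m w → Q m w →
      ε * μ (cyl m w) ≤ μ (cyl m w ∩ {X | X (m+1) = w m + step})) :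
    μ (BadSet step Q) = 0 := by
  rw [BadSet, measure_iUnion_null_iff]
  intro N
  have hlim : Tendsto (fun j : ℕ => (1 - ε) ^ (j+1)) atTop (𝓝 0) := by
    have h1 : (1 : ℝ≥0∞) - ε < 1 :=
      ENNReal.sub_lt_self ENNReal.one_ne_top one_ne_zero (ne_of_gt hε0)
    have := ENNReal.tendsto_pow_atTop_nhds_zero_of_lt_one h1
    exact this.comp (tendsto_add_atTop_nat 1)
  have hle : ∀ j : ℕ, μ (⋂ j', FevSet step Q N j') ≤ (1 - ε) ^ (j+1) := fun j =>
    (measure_mono (Set.iInter_subset _ j)).trans (measure_FevSet_pow hQ μ ε hε1 H j)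
  have := le_of_tendsto_of_tendsto' (tendsto_const_nhds
    (x := μ (⋂ j', FevSet step Q N j')) (f := atTop)) hlim hle
  simpa using this

include hQ in
/-- Paths with infinitely many qualifying times but finitely many successes lie in `BadSet`. -/
lemma bad_subset :
    {X : Traj d | {n | Q n X}.Infinite ∧
      {n | Q n X ∧ X (n+1) = X n + step}.Finite} ⊆ BadSet step Q := by
  classical
  intro X hX
  obtain ⟨hinf, hfin⟩ := hX
  obtain ⟨N₀, hN₀⟩ := hfin.bddAbove
  set N := N₀ + 1 with hN
  rw [BadSet, Set.mem_iUnion]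
  refine ⟨N, Set.mem_iInter.2 fun j => ?_⟩
  set p : ℕ → Prop := fun n => N ≤ n ∧ Q n X with hp
  have hpinf : (setOf p).Infinite := by
    have : setOf p = {n | Q n X} \ {n | n < N} := by
      ext n; simp [hp, not_lt, and_comm]; exact Iff.rfl
    rw [this]
    exact hinf.diff (Set.finite_lt_nat N)
  set m := Nat.nth p j with hm
  have hpm : p m := Nat.nth_mem_of_infinite hpinf j
  have hcount : Nat.count p m = j := Nat.count_nth_of_infinite hpinf j
  have hqc : qcount Q N m X = j := by
    rw [← hcount, Nat.count_eq_card_filter_range]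
    unfold qcount
    congr 1
  have hfail : ∀ n, N ≤ n → Q n X → X (n+1) ≠ X n + step := by
    intro n hn hq hsucc
    have : n ∈ {n | Q n X ∧ X (n+1) = X n + step} := ⟨hq, hsucc⟩
    have := hN₀ this
    omega
  have hag : ∀ i ≤ m, X i = trunc m X i := fun i hi => (trunc_eq_of_le X hi).symm
  rw [FevSet, Set.mem_iUnion]
  refine ⟨⟨(m, trunc m X), ?_⟩, mem_cyl_trunc m X, ?_⟩
  · refine ⟨isPref_trunc m X, hpm.1, hQ m X _ hag hpm.2, ?_, ?_⟩
    · rw [← qcount_transfer hQ hag le_rfl]; exact hqc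
    · rw [← allFail_transfer hQ hag le_rfl]
      intro n hn hNn hq
      exact hfail n hNn hq
  · simp only [Set.mem_setOf_eq]
    rw [trunc_eq_of_le X le_rfl]
    exact hfail m hpm.1 hpm.2


end BC2

/-- the environment row at site `x`, recentered. -/
def fam (x : Zd d) (ω : EnvSp d) : Zd d → ℝ := fun y => ω.1 x (x + y)

lemma measurable_fam (x : Zd d) : Measurable (fam x) :=
  measurable_pi_lambda _ fun y =>
    (measurable_pi_apply (x + y)).comp ((measurable_pi_apply x).comp measurable_subtype_coe)

lemma entry_le_one (ω : EnvSp d) (x z : Zd d) : ω.1 x z ≤ 1 :=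
  le_hasSum (ω.2.2 x) z fun j _ => ω.2.1 x j

lemma entry_nonneg (ω : EnvSp d) (x z : Zd d) : 0 ≤ ω.1 x z := ω.2.1 x z

variable (P : Measure (EnvSp d)) [IsProbabilityMeasure P]

lemma lintegral_prod_rows (hC1 : CondC1 P) (G : Zd d → (Zd d → ℝ) → ℝ≥0∞)
    (hG : ∀ x, Measurable (G x)) (s : Finset (Zd d)) :
    ∫⁻ ω, ∏ x ∈ s, G x (fam x ω) ∂P = ∏ x ∈ s, ∫⁻ ω, G x (fam x ω) ∂P := by
  classical
  have hfam : iIndepFun (fun x => (G x) ∘ (fam x)) P :=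
    hC1.1.comp (fun x => G x) hG
  have hmeas : ∀ x : Zd d, Measurable ((G x) ∘ (fam x)) :=
    fun x => (hG x).comp (measurable_fam x)
  induction s using Finset.induction_on with
  | empty => simp
  | insert a s ha ih =>
    have hind : IndepFun (∏ j ∈ s, (G j) ∘ (fam j)) ((G a) ∘ (fam a)) P :=
      hfam.indepFun_finset_prod_of_notMem hmeas ha
    have hprodmeas : Measurable (fun ω => ∏ x ∈ s, G x (fam x ω)) :=
      Finset.measurable_prod _ fun x _ => hmeas x
    calc ∫⁻ ω, ∏ x ∈ insert a s, G x (fam x ω) ∂P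
        = ∫⁻ ω, (∏ x ∈ s, G x (fam x ω)) * G a (fam a ω) ∂P := by
          apply lintegral_congr; intro ω
          rw [Finset.prod_insert ha, mul_comm]
      _ = (∫⁻ ω, ∏ x ∈ s, G x (fam x ω) ∂P) * ∫⁻ ω, G a (fam a ω) ∂P := by
          have := lintegral_mul_eq_lintegral_mul_lintegral_of_indepFun''
            (μ := P) (hprodmeas.aemeasurable) ((hmeas a).aemeasurable) ?_
          · exact this
          · have heq : (fun ω => ∏ x ∈ s, G x (fam x ω)) = ∏ j ∈ s, (G j) ∘ (fam j) := by
              funext ω; rw [Finset.prod_apply]; rfl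
            rw [heq]; exact hind
      _ = ∏ x ∈ insert a s, ∫⁻ ω, G x (fam x ω) ∂P := by
          rw [ih, Finset.prod_insert ha, mul_comm]

lemma lintegral_row_ident (hC1 : CondC1 P) (x : Zd d) (G : (Zd d → ℝ) → ℝ≥0∞)
    (hG : Measurable G) :
    ∫⁻ ω, G (fam x ω) ∂P = ∫⁻ ω, G (fam 0 ω) ∂P :=
  ((hC1.2 x).comp hG).lintegral_eq

/-- probability of a path in the environment. -/
def pathProd (n : ℕ) (v : ℕ → Zd d) (ω : EnvSp d) : ℝ≥0∞ :=
  ∏ i ∈ Finset.range n, ENNReal.ofReal (ω.1 (v i) (v (i + 1)))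

lemma measurable_pathProd (n : ℕ) (v : ℕ → Zd d) : Measurable (pathProd n v) := by
  apply Finset.measurable_prod
  intro i _
  exact ENNReal.measurable_ofReal.comp
    ((measurable_pi_apply (v (i+1))).comp ((measurable_pi_apply (v i)).comp measurable_subtype_coe))

open scoped Classical in
/-- per-row contribution of a path. -/
def rowFn (n : ℕ) (v : ℕ → Zd d) (x : Zd d) : (Zd d → ℝ) → ℝ≥0∞ :=
  fun u => ∏ i ∈ (Finset.range n).filter (fun i => v i = x), ENNReal.ofReal (u (v (i+1) - v i))

lemma measurable_rowFn (n : ℕ) (v : ℕ → Zd d) (x : Zd d) : Measurable (rowFn n v x) :=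
  Finset.measurable_prod _ fun i _ => ENNReal.measurable_ofReal.comp (measurable_pi_apply _)

open scoped Classical in
lemma pathProd_eq_prod_rows (n : ℕ) (v : ℕ → Zd d) (ω : EnvSp d) :
    pathProd n v ω = ∏ x ∈ (Finset.range n).image v, rowFn n v x (fam x ω) := by
  unfold pathProd rowFn
  rw [← Finset.prod_fiberwise_of_maps_to (g := v) (fun i hi => Finset.mem_image_of_mem v hi)]
  apply Finset.prod_congr rfl
  intro x hx
  apply Finset.prod_congr rfl
  intro i hi
  have hvx : v i = x := (Finset.mem_filter.1 hi).2
  have hx2 : x + (v (i+1) - v i) = v (i+1) := by rw [← hvx]; abel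
  show ENNReal.ofReal (ω.1 (v i) (v (i+1))) = ENNReal.ofReal (ω.1 x (x + (v (i+1) - v i)))
  rw [hx2, hvx]

open scoped Classical in
lemma lintegral_pathProd_eq (hC1 : CondC1 P) (n : ℕ) (v : ℕ → Zd d) :
    ∫⁻ ω, pathProd n v ω ∂P =
      ∏ x ∈ (Finset.range n).image v, ∫⁻ ω, rowFn n v x (fam 0 ω) ∂P := by
  calc ∫⁻ ω, pathProd n v ω ∂P
      = ∫⁻ ω, ∏ x ∈ (Finset.range n).image v, rowFn n v x (fam x ω) ∂P :=
        lintegral_congr (pathProd_eq_prod_rows n v)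
    _ = ∏ x ∈ (Finset.range n).image v, ∫⁻ ω, rowFn n v x (fam x ω) ∂P :=
        lintegral_prod_rows P hC1 _ (measurable_rowFn n v) _
    _ = _ := Finset.prod_congr rfl fun x _ =>
        lintegral_row_ident P hC1 x _ (measurable_rowFn n v x)

open scoped Classical in
/-- translation invariance along a path. -/
lemma lintegral_pathProd_shift (hC1 : CondC1 P) (n : ℕ) (v : ℕ → Zd d) (z : Zd d) :
    ∫⁻ ω, pathProd n (fun i => v i + z) ω ∂P = ∫⁻ ω, pathProd n v ω ∂P := by
  rw [lintegral_pathProd_eq P hC1, lintegral_pathProd_eq P hC1]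
  have himg : (Finset.range n).image (fun i => v i + z) =
      ((Finset.range n).image v).image (fun x => x + z) := by
    rw [Finset.image_image]; rfl
  rw [himg, Finset.prod_image (by intro a _ b _ h; exact add_right_cancel h)]
  apply Finset.prod_congr rfl
  intro x hx
  have hfn : rowFn n (fun i => v i + z) (x + z) = rowFn n v x := by
    funext u
    unfold rowFn
    have hflt : (Finset.range n).filter (fun i => v i + z = x + z) =
        (Finset.range n).filter (fun i => v i = x) := by
      apply Finset.filter_congr; intro i _
      constructor
      · intro h; exact add_right_cancel h
      · intro h; rw [h]
    rw [hflt]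
    apply Finset.prod_congr rfl
    intro i _
    congr 2
    rw [add_sub_add_right_eq_sub]
  rw [hfn]

open scoped Classical in
/-- the fresh-site one-step factorization. -/
lemma lintegral_pathProd_fresh (hC1 : CondC1 P) (n : ℕ) (w : ℕ → Zd d) (e : Zd d)
    (hf : ∀ i < n, w i ≠ w n) :
    ∫⁻ ω, pathProd n w ω * ENNReal.ofReal (ω.1 (w n) (w n + e)) ∂P
      = (∫⁻ ω, ENNReal.ofReal (ω.1 0 (0 + e)) ∂P) * ∫⁻ ω, pathProd n w ω ∂P := by
  set y := w n with hy
  set s := (Finset.range n).image w with hs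
  have hys : y ∉ s := by
    intro hc
    obtain ⟨i, hi, hwi⟩ := Finset.mem_image.1 hc
    exact hf i (Finset.mem_range.1 hi) hwi
  set Gy : (Zd d → ℝ) → ℝ≥0∞ := fun u => ENNReal.ofReal (u e) with hGy
  have hGymeas : Measurable Gy := ENNReal.measurable_ofReal.comp (measurable_pi_apply e)
  set Gfun : Zd d → (Zd d → ℝ) → ℝ≥0∞ := fun x => if x = y then Gy else rowFn n w x with hGfun
  have hGmeas : ∀ x, Measurable (Gfun x) := by
    intro x
    by_cases hx : x = y <;> simp [hGfun, hx, hGymeas, measurable_rowFn]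
  have hfam : iIndepFun (fun x => (Gfun x) ∘ (fam x)) P :=
    hC1.1.comp (fun x => Gfun x) hGmeas
  have hmeas : ∀ x : Zd d, Measurable ((Gfun x) ∘ (fam x)) :=
    fun x => (hGmeas x).comp (measurable_fam x)
  have hind : IndepFun (∏ j ∈ s, (Gfun j) ∘ (fam j)) ((Gfun y) ∘ (fam y)) P :=
    hfam.indepFun_finset_prod_of_notMem hmeas hys
  have hprodeq : (∏ j ∈ s, (Gfun j) ∘ (fam j)) = fun ω => ∏ x ∈ s, rowFn n w x (fam x ω) := by
    funext ω; rw [Finset.prod_apply]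
    apply Finset.prod_congr rfl
    intro x hx
    have : x ≠ y := fun h => hys (h ▸ hx)
    simp [hGfun, this]
  have hstep : ∀ ω : EnvSp d, ENNReal.ofReal (ω.1 (w n) (w n + e)) = Gy (fam y ω) := by
    intro ω; rfl
  calc ∫⁻ ω, pathProd n w ω * ENNReal.ofReal (ω.1 (w n) (w n + e)) ∂P
      = ∫⁻ ω, (∏ x ∈ s, rowFn n w x (fam x ω)) * Gy (fam y ω) ∂P := by
        apply lintegral_congr; intro ω
        rw [pathProd_eq_prod_rows, hstep ω]
    _ = (∫⁻ ω, ∏ x ∈ s, rowFn n w x (fam x ω) ∂P) * ∫⁻ ω, Gy (fam y ω) ∂P := by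
        apply lintegral_mul_eq_lintegral_mul_lintegral_of_indepFun''
          ((Finset.measurable_prod _ fun x _ => (measurable_rowFn n w x).comp
            (measurable_fam x)).aemeasurable)
          ((hGymeas.comp (measurable_fam y)).aemeasurable)
        have h2 : ((Gfun y) ∘ (fam y)) = fun ω => Gy (fam y ω) := by
          funext ω; simp [hGfun]
        rw [hprodeq, h2] at hind
        exact hind
    _ = (∫⁻ ω, ENNReal.ofReal (ω.1 0 (0 + e)) ∂P) * ∫⁻ ω, pathProd n w ω ∂P := by
        rw [mul_comm]
        congr 1
        · rw [lintegral_row_ident P hC1 y Gy hGymeas]; rfl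
        · exact (lintegral_congr (fun ω => (pathProd_eq_prod_rows n w ω))).symm




/-- one-point extension of a prefix. -/
def ext1 (m : ℕ) (w : ℕ → Zd d) (z : Zd d) : ℕ → Zd d := fun i => if i ≤ m then w i else z

lemma cyl_inter_ext1 (m : ℕ) (w : ℕ → Zd d) (z : Zd d) :
    cyl m w ∩ {X : Traj d | X (m+1) = z} = cyl (m+1) (ext1 m w z) := by
  ext X
  simp only [cyl, ext1, Set.mem_inter_iff, Set.mem_setOf_eq]
  constructor
  · rintro ⟨h1, h2⟩ i hi
    by_cases him : i ≤ m
    · rw [if_pos him]; exact h1 i him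
    · have : i = m + 1 := by omega
      rw [if_neg him, this]; exact h2
  · intro h
    constructor
    · intro i hi
      have := h i (le_trans hi (Nat.le_succ m))
      rwa [if_pos hi] at this
    · have := h (m+1) le_rfl
      rwa [if_neg (by omega)] at this

lemma pathProd_ext1 (m : ℕ) (w : ℕ → Zd d) (z : Zd d) (ω : EnvSp d) :
    pathProd (m+1) (ext1 m w z) ω = pathProd m w ω * ENNReal.ofReal (ω.1 (w m) z) := by
  unfold pathProd
  rw [Finset.prod_range_succ]
  congr 1
  · apply Finset.prod_congr rfl
    intro i hi
    rw [Finset.mem_range] at hi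
    rw [ext1, ext1, if_pos (le_of_lt hi), if_pos (by omega : i + 1 ≤ m)]
  · rw [ext1, ext1, if_pos le_rfl, if_neg (by omega)]

section Quenched
variable (κ : Zd d → Kernel (EnvSp d) (Traj d)) (hκ : IsQuenched κ)

include hκ in
lemma kernel_cyl (x : Zd d) (ω : EnvSp d) (m : ℕ) (w : ℕ → Zd d) :
    (κ x) ω (cyl m w) = (if w 0 = x then 1 else 0) * pathProd m w ω :=
  hκ x ω m w

include hκ in
/-- the quenched one-step formula. -/
lemma kernel_step (x : Zd d) (ω : EnvSp d) (m : ℕ) (w : ℕ → Zd d) (z : Zd d) :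
    (κ x) ω (cyl m w ∩ {X : Traj d | X (m+1) = z}) =
      (κ x) ω (cyl m w) * ENNReal.ofReal (ω.1 (w m) z) := by
  rw [cyl_inter_ext1, kernel_cyl κ hκ, kernel_cyl κ hκ]
  have h0 : ext1 m w z 0 = w 0 := by rw [ext1, if_pos (Nat.zero_le m)]
  rw [h0, pathProd_ext1, mul_assoc]

variable (P : Measure (EnvSp d)) [IsProbabilityMeasure P] [∀ x, IsMarkovKernel (κ x)]

lemma ann_apply (x : Zd d) {s : Set (Traj d)} (hs : MeasurableSet s) :
    ann P κ x s = ∫⁻ ω, (κ x) ω s ∂P :=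
  Measure.bind_apply hs ((κ x).measurable.aemeasurable)

lemma ann_isProb (x : Zd d) : IsProbabilityMeasure (ann P κ x) := by
  constructor
  rw [ann_apply κ P x MeasurableSet.univ]
  simp [measure_univ]

include hκ in
lemma ann_cyl (m : ℕ) (w : ℕ → Zd d) :
    ann P κ 0 (cyl m w) =
      (if w 0 = 0 then 1 else 0) * ∫⁻ ω, pathProd m w ω ∂P := by
  rw [ann_apply κ P 0 (measurableSet_cyl m w)]
  rw [lintegral_congr (fun ω => kernel_cyl κ hκ 0 ω m w)]
  by_cases h : w 0 = 0 <;>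
    simp [h, lintegral_const_mul _ (measurable_pathProd m w)]

include hκ in
/-- annealed fresh-step identity. -/
lemma ann_fresh_step (hC1 : CondC1 P) (e : Zd d) (m : ℕ) (w : ℕ → Zd d)
    (hf : ∀ i < m, w i ≠ w m) :
    ann P κ 0 (cyl m w ∩ {X : Traj d | X (m+1) = w m + e}) =
      (∫⁻ ω, ENNReal.ofReal (ω.1 0 (0 + e)) ∂P) * ann P κ 0 (cyl m w) := by
  rw [cyl_inter_ext1, ann_cyl κ hκ P, ann_cyl κ hκ P]
  have h0 : ext1 m w (w m + e) 0 = w 0 := by rw [ext1, if_pos (Nat.zero_le m)]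
  rw [h0]
  rw [lintegral_congr (fun ω => pathProd_ext1 m w (w m + e) ω)]
  rw [lintegral_pathProd_fresh P hC1 m w e hf]
  ring

end Quenched

section Eps
variable (P : Measure (EnvSp d)) [IsProbabilityMeasure P]

lemma measurableSet_entry_pos (x z : Zd d) :
    MeasurableSet {ω : EnvSp d | 0 < ω.1 x z} := by
  have : {ω : EnvSp d | 0 < ω.1 x z} =
      (fun ω : EnvSp d => ω.1 x z) ⁻¹' (Set.Ioi 0) := rfl
  rw [this]
  exact ((measurable_pi_apply z).comp
    ((measurable_pi_apply x).comp measurable_subtype_coe)) measurableSet_Ioi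

/-- ε₀. -/
def eps0 (e : Zd d) : ℝ≥0∞ := ∫⁻ ω, ENNReal.ofReal (ω.1 0 ((0 : Zd d) + e)) ∂P

lemma eps0_le_one (e : Zd d) : eps0 P e ≤ 1 := by
  unfold eps0
  calc ∫⁻ ω, ENNReal.ofReal (ω.1 0 ((0 : Zd d) + e)) ∂P ≤ ∫⁻ _, 1 ∂P :=
        lintegral_mono fun ω => ENNReal.ofReal_le_one.2 (entry_le_one ω _ _)
    _ = 1 := by simp

lemma eps0_pos (e : Zd d) (hpos : P {ω : EnvSp d | 0 < ω.1 0 e} = 1) : 0 < eps0 P e := by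
  rw [pos_iff_ne_zero]
  intro h0
  unfold eps0 at h0
  have hmeas : Measurable fun ω : EnvSp d => ENNReal.ofReal (ω.1 0 ((0 : Zd d) + e)) :=
    ENNReal.measurable_ofReal.comp
      ((measurable_pi_apply _).comp ((measurable_pi_apply _).comp measurable_subtype_coe))
  rw [lintegral_eq_zero_iff hmeas] at h0
  haveI : (ae P).NeBot := ae_neBot.2 (IsProbabilityMeasure.ne_zero P)
  have hae : ∀ᵐ ω ∂P, 0 < ω.1 0 e := by
    rw [ae_iff]
    have hms := measurableSet_entry_pos (d := d) 0 e
    have : {ω : EnvSp d | ¬ 0 < ω.1 0 e} = {ω : EnvSp d | 0 < ω.1 0 e}ᶜ := by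
      ext ω; simp
    rw [this, measure_compl hms (measure_ne_top P _), hpos, measure_univ]
    simp
  have hco := h0.and hae
  obtain ⟨ω, hω1, hω2⟩ := hco.exists
  have h00 : (0 : Zd d) + e = e := zero_add e
  rw [Pi.zero_apply] at hω1
  rw [h00] at hω1
  simp only [ENNReal.ofReal_eq_zero] at hω1
  linarith

lemma site_pos (hC1 : CondC1 P) (y e : Zd d)
    (hpos : P {ω : EnvSp d | 0 < ω.1 0 e} = 1) :
    ∀ᵐ ω ∂P, 0 < ω.1 y (y + e) := by
  have hid : IdentDistrib (fam y) (fam 0) P P := hC1.2 y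
  have hms : MeasurableSet {u : Zd d → ℝ | 0 < u e} :=
    (measurable_pi_apply e) measurableSet_Ioi
  have hset : P {ω : EnvSp d | 0 < ω.1 y (y + e)} = 1 := by
    have h1 : {ω : EnvSp d | 0 < ω.1 y (y + e)} = (fam y) ⁻¹' {u | 0 < u e} := rfl
    have h2 : (fam (0 : Zd d)) ⁻¹' {u | 0 < u e} = {ω : EnvSp d | 0 < ω.1 0 e} := by
      ext ω
      show 0 < ω.1 0 ((0 : Zd d) + e) ↔ 0 < ω.1 0 e
      rw [zero_add]
    rw [h1, ← Measure.map_apply (measurable_fam y) hms, hid.map_eq,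
      Measure.map_apply (measurable_fam 0) hms, h2]
    exact hpos
  rw [ae_iff]
  have hms2 := measurableSet_entry_pos (d := d) y (y + e)
  have hc : {ω : EnvSp d | ¬ 0 < ω.1 y (y + e)} = {ω : EnvSp d | 0 < ω.1 y (y + e)}ᶜ := by
    ext ω; simp
  rw [hc, measure_compl hms2 (measure_ne_top P _), hset, measure_univ]
  simp

end Eps

lemma dotl_add (x y : Zd d) (ℓ : EuclideanSpace ℝ (Fin d)) :
    dotl (x + y) ℓ = dotl x ℓ + dotl y ℓ := by
  unfold dotl
  rw [← Finset.sum_add_distrib]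
  apply Finset.sum_congr rfl
  intro i _
  have h1 : (x + y) i = x i + y i := rfl
  rw [h1]; push_cast; ring

lemma dotl_zero (ℓ : EuclideanSpace ℝ (Fin d)) : dotl (0 : Zd d) ℓ = 0 := by
  unfold dotl; simp

/-- There is a generator taking `dotl` strictly down. -/
lemma exists_down (P : Measure (EnvSp d)) (hC3 : CondC3 P)
    (ℓ : EuclideanSpace ℝ (Fin d)) (hℓ : ‖ℓ‖ = 1) :
    ∃ e : Zd d, P {ω : EnvSp d | 0 < ω.1 0 e} = 1 ∧ dotl e ℓ < 0 := by
  obtain ⟨Ns, hclose, hpos⟩ := hC3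
  by_contra hcon
  push_neg at hcon
  have hge : ∀ y ∈ Ns, 0 ≤ dotl y ℓ := fun y hy => hcon y (hpos y hy)
  have hall : ∀ x : Zd d, 0 ≤ dotl x ℓ := by
    intro x
    have hx : x ∈ AddSubmonoid.closure Ns := by rw [hclose]; trivial
    induction hx using AddSubmonoid.closure_induction with
    | mem y hy => exact hge y hy
    | zero => rw [dotl_zero]
    | add a b _ _ ha hb => rw [dotl_add]; positivity
  -- but some lattice vector has negative dot
  have hl0 : ℓ ≠ 0 := by
    intro h; rw [h] at hℓ; simp at hℓ
  have : ∃ i, ℓ i ≠ 0 := by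
    by_contra hja
    push_neg at hja
    apply hl0
    ext i
    exact hja i
  obtain ⟨i, hi⟩ := this
  classical
  set x : Zd d := fun j => if j = i then (if 0 < ℓ i then -1 else 1) else 0 with hx
  have hdx : dotl x ℓ = (if 0 < ℓ i then (-1 : ℝ) else 1) * ℓ i := by
    unfold dotl
    rw [Finset.sum_eq_single i]
    · simp [hx]
    · intro j _ hj
      simp [hx, hj]
    · intro h
      exact absurd (Finset.mem_univ i) h
  have hneg : dotl x ℓ < 0 := by
    rw [hdx]
    rcases lt_trichotomy 0 (ℓ i) with h | h | h
    · rw [if_pos h]; nlinarith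
    · exact absurd h.symm hi
    · rw [if_neg (by linarith)]; nlinarith
  exact absurd (hall x) (not_le.2 hneg)

lemma Tlt_top_iff (ℓ : EuclideanSpace ℝ (Fin d)) (X : Traj d) :
    Tlt ℓ 0 X = ⊤ ↔ ∀ n, 0 ≤ dotl (X n) ℓ := by
  unfold Tlt hitTime
  rw [iInf_eq_top]
  constructor
  · intro h n
    by_contra hneg
    have := h n
    rw [iInf_eq_top] at this
    have h2 := this (by simpa using not_le.1 hneg)
    exact (ENat.coe_ne_top n) h2
  · intro h k
    rw [iInf_eq_top]
    intro hk
    exact absurd (h k) (by simpa using hk)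

/-- Loop erasures agree with a shift of the original path eventually. -/
lemma loopErasure_tail {α : Type*} {X Y : ℕ → α} (h : Y ∈ LoopErasures X) :
    ∃ s i₀ : ℕ, ∀ i, i₀ ≤ i → Y i = X (i + s) := by
  induction h with
  | refl => exact ⟨0, 0, fun i _ => rfl⟩
  | @tail Z Yc hZ hZY ih =>
    obtain ⟨s, i₀, hs⟩ := ih
    obtain ⟨m, n, hmn, _, hY⟩ := hZY
    refine ⟨(n - m) + s, max m i₀, fun i hi => ?_⟩
    have him : m ≤ i := le_trans (le_max_left _ _) hi
    have hi0 : i₀ ≤ i := le_trans (le_max_right _ _) hi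
    simp only [hY]
    rw [if_neg (by omega)]
    have h2 : i₀ ≤ i + (n - m) := by omega
    rw [hs _ h2]
    congr 1
    omega

lemma Bdir_subset_ev (ℓ : EuclideanSpace ℝ (Fin d)) :
    Bdir ℓ ⊆ {X : Traj d | ∀ᶠ n in atTop, 0 ≤ dotl (X n) ℓ} := by
  rintro X ⟨Y, hY, hTY⟩
  rw [Tlt_top_iff] at hTY
  obtain ⟨s, i₀, hs⟩ := loopErasure_tail hY
  rw [Set.mem_setOf_eq, eventually_atTop]
  refine ⟨i₀ + s, fun j hj => ?_⟩
  have h1 : i₀ ≤ j - s := by omega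
  have h2 : (j - s) + s = j := by omega
  have := hTY (j - s)
  rwa [hs _ h1, h2] at this


namespace PF
variable {d : ℕ} (ℓ : EuclideanSpace ℝ (Fin d)) (δ : ℝ)

/-- annealed qualifying predicate: fresh site with `dotl` in the `k`-th window. -/
def QbP (k : ℤ) : ℕ → Traj d → Prop := fun n X =>
  (∀ i < n, X i ≠ X n) ∧
    dotl (X n) ℓ ∈ Set.Ioo ((k : ℝ) * (δ/8) - δ/4) ((k : ℝ) * (δ/8) + δ/4)

variable {ℓ δ}

lemma path_false (e : Zd d) (hδe : dotl e ℓ = -δ) (δpos : 0 < δ) {X : Traj d}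
    (hev : ∀ᶠ n in atTop, 0 ≤ dotl (X n) ℓ)
    (hnA : X ∉ Adir ℓ)
    (ha : ∀ y : Zd d, {n | X n = y}.Infinite →
      {n | X n = y ∧ X (n+1) = X n + e}.Infinite)
    (hb : ∀ k : ℤ, {n | QbP ℓ δ k n X}.Infinite →
      {n | QbP ℓ δ k n X ∧ X (n+1) = X n + e}.Infinite) : False := by
  classical
  set u : ℕ → ℝ := fun n => dotl (X n) ℓ with hu
  have hbd : IsBoundedUnder (· ≥ ·) atTop u := ⟨0, by simpa [eventually_map] using hev⟩
  have hnt : ¬ Tendsto u atTop atTop := hnA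
  have hfb : ∃ b : ℝ, ∃ᶠ n in atTop, u n < b := by
    rw [tendsto_atTop] at hnt
    push_neg at hnt
    obtain ⟨b, hbfreq⟩ := hnt
    exact ⟨b, by simpa [not_le] using (not_eventually.1 hbfreq)⟩
  obtain ⟨b, hbfreq⟩ := hfb
  have hcob : IsCoboundedUnder (· ≥ ·) atTop u :=
    IsCoboundedUnder.of_frequently_le (hbfreq.mono fun n h => le_of_lt h)
  set c : ℝ := liminf u atTop with hc
  -- basic liminf facts
  have hfreq_lt : ∀ ε : ℝ, 0 < ε → ∃ᶠ n in atTop, u n < c + ε := fun ε hε =>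
    frequently_lt_of_liminf_lt hcob (by linarith)
  have hev_gt : ∀ ε : ℝ, 0 < ε → ∀ᶠ n in atTop, c - ε < u n := fun ε hε =>
    eventually_lt_of_lt_liminf (by linarith) hbd
  have hctr : ∀ b' : ℝ, b' < c → ¬ (∃ᶠ n in atTop, u n ≤ b') := by
    intro b' hb' hfreq
    have := liminf_le_of_frequently_le hfreq hbd
    rw [← hc] at this
    linarith
  -- the window index
  set k : ℤ := ⌊c / (δ/8)⌋ with hk
  have hδ8 : (0:ℝ) < δ/8 := by linarith
  have hk1 : (k : ℝ) * (δ/8) ≤ c := by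
    rw [hk]
    have := Int.floor_le (c / (δ/8))
    calc (⌊c / (δ/8)⌋ : ℝ) * (δ/8) ≤ (c / (δ/8)) * (δ/8) := by
          apply mul_le_mul_of_nonneg_right this (le_of_lt hδ8)
      _ = c := by field_simp
  have hk2 : c < (k : ℝ) * (δ/8) + δ/8 := by
    rw [hk]
    have := Int.lt_floor_add_one (c / (δ/8))
    have h2 : c / (δ/8) * (δ/8) < ((⌊c / (δ/8)⌋ : ℝ) + 1) * (δ/8) := by
      apply mul_lt_mul_of_pos_right this hδ8
    rw [div_mul_cancel₀ _ (ne_of_gt hδ8)] at h2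
    linarith
  -- infinitely many times in the small window
  set S : Set ℕ := {n | u n ∈ Set.Ioo (c - δ/16) (c + δ/16)} with hS
  have hSinf : S.Infinite := by
    rw [← Nat.frequently_atTop_iff_infinite]
    exact ((hfreq_lt (δ/16) (by linarith)).and_eventually
      (hev_gt (δ/16) (by linarith))).mono fun n hn => ⟨hn.2, hn.1⟩
  -- dichotomy
  by_cases hcase : ∃ y : Zd d, {n | n ∈ S ∧ X n = y}.Infinite
  · -- a site in the window is visited infinitely often
    obtain ⟨y, hy⟩ := hcase
    obtain ⟨n₁, hn₁⟩ := hy.nonempty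
    have hywin : dotl y ℓ ∈ Set.Ioo (c - δ/16) (c + δ/16) := by
      rw [← hn₁.2]; exact hn₁.1
    have hYinf : {n | X n = y}.Infinite := hy.mono fun n h => h.2
    have hsucc := ha y hYinf
    -- successes push below c
    have hfreq2 : ∃ᶠ m in atTop, u m ≤ dotl y ℓ - δ := by
      rw [Nat.frequently_atTop_iff_infinite]
      have himg : ((fun n => n + 1) '' {n | X n = y ∧ X (n+1) = X n + e}).Infinite :=
        hsucc.image (Function.Injective.injOn (add_left_injective 1))
      apply himg.mono
      rintro m ⟨n, ⟨hXn, hXsucc⟩, rfl⟩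
      have : u (n+1) = dotl y ℓ - δ := by
        rw [hu]
        simp only
        rw [hXsucc, hXn, dotl_add, hδe]
        ring
      simp [Set.mem_setOf_eq, this]
    exact hctr (dotl y ℓ - δ) (by have := hywin.2; linarith) hfreq2
  · -- infinitely many fresh sites in the window
    push_neg at hcase
    have himgInf : (X '' S).Infinite := by
      intro hfin
      apply hSinf
      have : S ⊆ ⋃ y ∈ X '' S, {n | n ∈ S ∧ X n = y} := by
        intro n hn
        exact Set.mem_biUnion (Set.mem_image_of_mem X hn) ⟨hn, rfl⟩
      exact (hfin.biUnion' (fun y _ => hcase y)).subset this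
    -- first visit times give qualifying times
    have hQinf : {n | QbP ℓ δ k n X}.Infinite := by
      apply Set.infinite_of_injOn_mapsTo
        (f := fun y : Zd d => if h : ∃ n, X n = y then Nat.find h else 0)
        (s := X '' S) ?_ ?_ himgInf
      · -- injective on the image
        intro y1 hy1 y2 hy2 hf
        obtain ⟨m1, hm1S, rfl⟩ := hy1
        obtain ⟨m2, hm2S, rfl⟩ := hy2
        have h1 : ∃ n, X n = X m1 := ⟨m1, rfl⟩
        have h2 : ∃ n, X n = X m2 := ⟨m2, rfl⟩
        simp only [dif_pos h1, dif_pos h2] at hf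
        rw [← Nat.find_spec h1, ← Nat.find_spec h2, hf]
      · -- maps into qualifying times
        rintro y ⟨m, hmS, rfl⟩
        have hex : ∃ n, X n = X m := ⟨m, rfl⟩
        simp only [Set.mem_setOf_eq, dif_pos hex]
        have hspec : X (Nat.find hex) = X m := Nat.find_spec hex
        have hwin : u m ∈ Set.Ioo (c - δ/16) (c + δ/16) := hmS
        constructor
        · intro i hi
          rw [hspec]
          exact Nat.find_min hex hi
        · rw [hspec]
          constructor
          · have := hwin.1; have := hk1
            linarith [hwin.1]
          · have := hwin.2
            simp only [hu] at this ⊢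
            linarith [hk2]
    -- successes push below c, contradiction
    have hsucc := hb k hQinf
    have hfreq2 : ∃ᶠ m' in atTop, u m' ≤ (k : ℝ) * (δ/8) + δ/4 - δ := by
      rw [Nat.frequently_atTop_iff_infinite]
      have himg : ((fun n => n + 1) '' {n | QbP ℓ δ k n X ∧ X (n+1) = X n + e}).Infinite :=
        hsucc.image (Function.Injective.injOn (add_left_injective 1))
      apply himg.mono
      rintro m' ⟨n, ⟨hQn, hXsucc⟩, rfl⟩
      have hval : u (n+1) = u n - δ := by
        simp only [hu]
        rw [hXsucc, dotl_add, hδe]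
        ring
      have hlt : u n < (k : ℝ) * (δ/8) + δ/4 := hQn.2.2
      simp only [Set.mem_setOf_eq, hval]
      linarith
    exact hctr ((k : ℝ) * (δ/8) + δ/4 - δ) (by linarith) hfreq2

end PF

lemma dotl_sub (x y : Zd d) (ℓ : EuclideanSpace ℝ (Fin d)) :
    dotl (x - y) ℓ = dotl x ℓ - dotl y ℓ := by
  have := dotl_add (x - y) y ℓ
  rw [sub_add_cancel] at this
  linarith

section KKsec
variable (ℓ : EuclideanSpace ℝ (Fin d))

def staySet (m : ℕ) : Set (Traj d) := {X | ∀ n ≤ m, 0 ≤ dotl (X n) ℓ}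

def stayAll : Set (Traj d) := {X | ∀ n, 0 ≤ dotl (X n) ℓ}

def KK (t : ℕ) (z : Zd d) : Set (Traj d) :=
  {X | X t = z ∧ ∀ n, t ≤ n → dotl z ℓ ≤ dotl (X n) ℓ}

def KKm (t : ℕ) (z : Zd d) (m : ℕ) : Set (Traj d) :=
  {X | X t = z ∧ ∀ n, t ≤ n → n ≤ t + m → dotl z ℓ ≤ dotl (X n) ℓ}

lemma measurableSet_staySet (m : ℕ) : MeasurableSet (staySet ℓ m) := by
  have : staySet ℓ m = ⋂ n ∈ Finset.range (m+1), {X : Traj d | X n ∈ {x | 0 ≤ dotl x ℓ}} := by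
    ext X; simp [staySet, Nat.lt_succ_iff]
  rw [this]
  exact Finset.measurableSet_biInter _ fun n _ => measurableSet_evalMem n _

lemma iInter_staySet : (⋂ m, staySet ℓ m) = stayAll ℓ := by
  ext X
  simp only [Set.mem_iInter, staySet, stayAll, Set.mem_setOf_eq]
  exact ⟨fun h n => h n n le_rfl, fun h m n _ => h n⟩

def Wset (t : ℕ) (z : Zd d) : Set (ℕ → Zd d) := {w | IsPref t w ∧ w t = z}

def Uset (m : ℕ) : Set (ℕ → Zd d) :=
  {u | IsPref m u ∧ u 0 = 0 ∧ ∀ n ≤ m, 0 ≤ dotl (u n) ℓ}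

def Jset (t : ℕ) (z : Zd d) (m : ℕ) : Set (ℕ → Zd d) :=
  {v | IsPref (t+m) v ∧ v t = z ∧ ∀ n, t ≤ n → n ≤ t + m → dotl z ℓ ≤ dotl (v n) ℓ}

lemma KKm_eq_iUnion (t : ℕ) (z : Zd d) (m : ℕ) :
    KKm ℓ t z m = ⋃ v : Jset ℓ t z m, cyl (t+m) v.1 := by
  ext X
  constructor
  · intro hX
    have hv : trunc (t+m) X ∈ Jset ℓ t z m := by
      refine ⟨isPref_trunc _ _, ?_, ?_⟩
      · rw [trunc_eq_of_le X (by omega)]; exact hX.1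
      · intro n hn1 hn2
        rw [trunc_eq_of_le X hn2]
        exact hX.2 n hn1 hn2
    exact Set.mem_iUnion.2 ⟨⟨_, hv⟩, mem_cyl_trunc _ _⟩
  · intro hX
    obtain ⟨⟨v, hv⟩, hXc⟩ := Set.mem_iUnion.1 hX
    constructor
    · rw [hXc t (by omega)]; exact hv.2.1
    · intro n hn1 hn2
      rw [hXc n hn2]
      exact hv.2.2 n hn1 hn2

/-- gluing map. -/
def glue (t : ℕ) (z : Zd d) (w u : ℕ → Zd d) : ℕ → Zd d :=
  fun i => if i ≤ t then w i else u (i - t) + z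

def headp (t : ℕ) (v : ℕ → Zd d) : ℕ → Zd d := fun i => v (min i t)
def tailp (t m : ℕ) (z : Zd d) (v : ℕ → Zd d) : ℕ → Zd d := fun i => v (t + min i m) - z

variable {ℓ}

lemma headp_mem {t m : ℕ} {z : Zd d} {v : ℕ → Zd d} (hv : v ∈ Jset ℓ t z m) :
    headp t v ∈ Wset t z := by
  refine ⟨fun i => ?_, ?_⟩
  · show v (min i t) = v (min (min i t) t)
    rw [min_assoc, min_self]
  · show v (min t t) = z
    rw [min_self]; exact hv.2.1

lemma tailp_mem {t m : ℕ} {z : Zd d} {v : ℕ → Zd d} (hv : v ∈ Jset ℓ t z m) :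
    tailp t m z v ∈ Uset ℓ m := by
  refine ⟨fun i => ?_, ?_, ?_⟩
  · show v (t + min i m) - z = v (t + min (min i m) m) - z
    rw [min_assoc, min_self]
  · show v (t + min 0 m) - z = 0
    simp only [Nat.zero_min, Nat.add_zero]
    rw [hv.2.1, sub_self]
  · intro n hn
    show 0 ≤ dotl (v (t + min n m) - z) ℓ
    rw [dotl_sub]
    have := hv.2.2 (t + min n m) (by omega) (by omega)
    linarith

lemma glue_mem {t m : ℕ} {z : Zd d} {w u : ℕ → Zd d}
    (hw : w ∈ Wset t z) (hu : u ∈ Uset ℓ m) :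
    glue t z w u ∈ Jset ℓ t z m := by
  refine ⟨fun i => ?_, ?_, ?_⟩
  · by_cases hi : i ≤ t + m
    · rw [min_eq_left hi]
    · rw [min_eq_right (by omega : t + m ≤ i)]
      show glue t z w u i = glue t z w u (t + m)
      by_cases hm : m = 0
      · subst hm
        unfold glue
        rw [if_neg (by omega), if_pos (by omega)]
        have h2 : u (i - t) = 0 := by
          have h3 := hu.1 (i - t)
          rwa [min_eq_right (by omega), hu.2.1] at h3
        rw [h2, zero_add]
        exact hw.2.symm
      · unfold glue
        rw [if_neg (by omega), if_neg (by omega)]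
        have h2 : u (i - t) = u m := by
          have h3 := hu.1 (i - t)
          rwa [min_eq_right (by omega)] at h3
        have h3 : t + m - t = m := by omega
        rw [h2, h3]
  · unfold glue
    rw [if_pos le_rfl]
    exact hw.2
  · intro n hn1 hn2
    unfold glue
    by_cases hn : n ≤ t
    · have hnt : n = t := le_antisymm hn hn1
      rw [if_pos hn, hnt, hw.2]
    · rw [if_neg hn]
      rw [dotl_add]
      have := hu.2.2 (n - t) (by omega)
      linarith

variable (ℓ)

/-- the split bijection. -/
def eqJ (t : ℕ) (z : Zd d) (m : ℕ) : Jset ℓ t z m ≃ Wset t z × Uset ℓ m where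
  toFun v := (⟨headp t v.1, headp_mem v.2⟩, ⟨tailp t m z v.1, tailp_mem v.2⟩)
  invFun p := ⟨glue t z p.1.1 p.2.1, glue_mem p.1.2 p.2.2⟩
  left_inv := by
    rintro ⟨v, hv⟩
    apply Subtype.ext
    funext i
    show glue t z (headp t v) (tailp t m z v) i = v i
    unfold glue headp tailp
    by_cases hi : i ≤ t
    · rw [if_pos hi, min_eq_left hi]
    · rw [if_neg hi, sub_add_cancel]
      by_cases hi2 : i ≤ t + m
      · have h1 : min (i - t) m = i - t := min_eq_left (by omega)
        have h2 : t + (i - t) = i := by omega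
        rw [h1, h2]
      · have h1 : min (i - t) m = m := min_eq_right (by omega)
        rw [h1]
        have h2 := hv.1 i
        rw [min_eq_right (by omega : t + m ≤ i)] at h2
        exact h2.symm
  right_inv := by
    rintro ⟨⟨w, hw⟩, ⟨u, hu⟩⟩
    apply Prod.ext
    · apply Subtype.ext
      funext i
      show glue t z w u (min i t) = w i
      unfold glue
      rw [if_pos (min_le_right i t)]
      exact (hw.1 i).symm
    · apply Subtype.ext
      funext i
      show glue t z w u (t + min i m) - z = u i
      unfold glue
      by_cases h0 : min i m = 0
      · rw [h0]
        simp only [Nat.add_zero]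
        rw [if_pos le_rfl, hw.2]
        have : u i = 0 := by
          rw [hu.1 i, h0]
          exact hu.2.1
        rw [this, sub_self]
      · rw [if_neg (by omega)]
        have h1 : t + min i m - t = min i m := by omega
        rw [h1, add_sub_cancel_right]
        exact (hu.1 i).symm

lemma glue_pathProd (t : ℕ) (z : Zd d) (m : ℕ) {w u : ℕ → Zd d}
    (hw : w ∈ Wset t z) (hu : u ∈ Uset ℓ m) (ω : EnvSp d) :
    (if glue t z w u 0 = 0 then (1:ℝ≥0∞) else 0) * pathProd (t+m) (glue t z w u) ω
      = ((if w 0 = 0 then (1:ℝ≥0∞) else 0) * pathProd t w ω) *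
        pathProd m (fun i => u i + z) ω := by
  have hg : ∀ j, 1 ≤ j → glue t z w u (t + j) = u j + z := by
    intro j hj
    unfold glue
    rw [if_neg (by omega)]
    have h1 : t + j - t = j := by omega
    rw [h1]
  have hg0 : glue t z w u (t + 0) = u 0 + z := by
    simp only [Nat.add_zero]
    unfold glue
    rw [if_pos le_rfl, hw.2, hu.2.1, zero_add]
  have hgle : ∀ j, j ≤ t → glue t z w u j = w j := by
    intro j hj
    unfold glue
    rw [if_pos hj]
  have h0 : glue t z w u 0 = w 0 := hgle 0 (Nat.zero_le t)
  rw [h0]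
  have hsplit : pathProd (t+m) (glue t z w u) ω = pathProd t w ω *
      pathProd m (fun i => u i + z) ω := by
    unfold pathProd
    rw [Finset.prod_range_add]
    congr 1
    · apply Finset.prod_congr rfl
      intro i hi
      rw [Finset.mem_range] at hi
      rw [hgle i (by omega), hgle (i+1) (by omega)]
    · apply Finset.prod_congr rfl
      intro i hi
      have e1 : glue t z w u (t + i) = u i + z := by
        rcases Nat.eq_zero_or_pos i with rfl | hip
        · exact hg0
        · exact hg i hip
      have e2 : glue t z w u (t + i + 1) = u (i+1) + z := hg (i+1) (by omega)
      rw [e1, e2]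
  rw [hsplit]
  ring

variable {κ : Zd d → Kernel (EnvSp d) (Traj d)} [∀ x, IsMarkovKernel (κ x)]
variable (hκ : IsQuenched κ)

include hκ in
/-- total mass of head-cylinders is at most one. -/
lemma tsum_head_le (t : ℕ) (z : Zd d) (ω : EnvSp d) :
    ∑' w : Wset t z, (if w.1 0 = 0 then (1:ℝ≥0∞) else 0) * pathProd t w.1 ω ≤ 1 := by
  have : Countable (Wset t z) :=
    (((countable_isPref t).mono (fun w hw => hw.1)) :
      (Wset (d := d) t z).Countable).to_subtype
  have heq : ∀ w : Wset t z, (if w.1 0 = 0 then (1:ℝ≥0∞) else 0) * pathProd t w.1 ω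
      = (κ 0) ω (cyl t w.1) := fun w => (kernel_cyl κ hκ 0 ω t w.1).symm
  have hdisj : Pairwise (Function.onFun Disjoint (fun w : Wset t z => cyl t w.1)) :=
    fun a b hab => cyl_disjoint a.2.1 b.2.1 (fun h => hab (Subtype.ext h))
  have hsum := measure_iUnion (μ := (κ 0) ω) hdisj (fun w : Wset t z => measurableSet_cyl t w.1)
  rw [tsum_congr heq, ← hsum]
  exact prob_le_one

include hκ in
lemma ann_KKm_le (P : Measure (EnvSp d)) [IsProbabilityMeasure P] (hC1 : CondC1 P)
    (t : ℕ) (z : Zd d) (m : ℕ) :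
    ann P κ 0 (KKm ℓ t z m) ≤ ann P κ 0 (staySet ℓ m) := by
  classical
  have hcntJ : (Jset ℓ t z m).Countable := (countable_isPref (t+m)).mono fun v hv => hv.1
  have hcntU : (Uset ℓ (d := d) m).Countable := (countable_isPref m).mono fun v hv => hv.1
  haveI := hcntJ.to_subtype
  haveI := hcntU.to_subtype
  have hdisjJ : Pairwise (Function.onFun Disjoint (fun v : Jset ℓ t z m => cyl (t+m) v.1)) :=
    fun a b hab => cyl_disjoint a.2.1 b.2.1 (fun h => hab (Subtype.ext h))
  have hdisjU : Pairwise (Function.onFun Disjoint (fun u : Uset ℓ (d := d) m => cyl m u.1)) :=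
    fun a b hab => cyl_disjoint a.2.1 b.2.1 (fun h => hab (Subtype.ext h))
  set F : Jset ℓ t z m → EnvSp d → ℝ≥0∞ :=
    fun v ω => (if v.1 0 = 0 then (1:ℝ≥0∞) else 0) * pathProd (t+m) v.1 ω with hF
  have hFmeas : ∀ v, Measurable (F v) := by
    intro v
    rw [hF]
    exact (measurable_pathProd _ _).const_mul _
  have hstep1 : ∀ v : Jset ℓ t z m, ann P κ 0 (cyl (t+m) v.1) = ∫⁻ ω, F v ω ∂P := by
    intro v
    rw [ann_cyl κ hκ P (t+m) v.1, hF]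
    rw [← lintegral_const_mul' _ _ (by split <;> simp)]
  have hpoint : ∀ ω : EnvSp d,
      (∑' v : Jset ℓ t z m, F v ω)
      ≤ ∑' u : Uset ℓ (d := d) m, pathProd m (fun i => u.1 i + z) ω := by
    intro ω
    rw [← Equiv.tsum_eq (eqJ ℓ t z m).symm (fun v => F v ω)]
    have hsimp : ∀ p : Wset t z × Uset ℓ (d := d) m,
        F ((eqJ ℓ t z m).symm p) ω
        = ((if p.1.1 0 = 0 then (1:ℝ≥0∞) else 0) * pathProd t p.1.1 ω) *
          pathProd m (fun i => p.2.1 i + z) ω := by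
      rintro ⟨⟨w, hw⟩, ⟨u, hu⟩⟩
      exact glue_pathProd ℓ t z m hw hu ω
    rw [tsum_congr hsimp]
    rw [ENNReal.tsum_prod']
    calc ∑' (w : Wset t z), ∑' (u : Uset ℓ (d := d) m),
          ((if w.1 0 = 0 then (1:ℝ≥0∞) else 0) * pathProd t w.1 ω) *
            pathProd m (fun i => u.1 i + z) ω
        = ∑' (w : Wset t z), ((if w.1 0 = 0 then (1:ℝ≥0∞) else 0) * pathProd t w.1 ω) *
            ∑' (u : Uset ℓ (d := d) m), pathProd m (fun i => u.1 i + z) ω := by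
          apply tsum_congr
          intro w
          rw [ENNReal.tsum_mul_left]
      _ = (∑' (w : Wset t z), (if w.1 0 = 0 then (1:ℝ≥0∞) else 0) * pathProd t w.1 ω) *
            ∑' (u : Uset ℓ (d := d) m), pathProd m (fun i => u.1 i + z) ω := by
          rw [ENNReal.tsum_mul_right]
      _ ≤ 1 * ∑' (u : Uset ℓ (d := d) m), pathProd m (fun i => u.1 i + z) ω :=
          mul_le_mul_left (tsum_head_le hκ t z ω) _
      _ = _ := one_mul _
  calc ann P κ 0 (KKm ℓ t z m)
      = ∑' v : Jset ℓ t z m, ann P κ 0 (cyl (t+m) v.1) := by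
        rw [KKm_eq_iUnion]
        exact measure_iUnion hdisjJ (fun v => measurableSet_cyl _ _)
    _ = ∑' v : Jset ℓ t z m, ∫⁻ ω, F v ω ∂P := tsum_congr hstep1
    _ = ∫⁻ ω, ∑' v : Jset ℓ t z m, F v ω ∂P :=
        (lintegral_tsum (fun v => (hFmeas v).aemeasurable)).symm
    _ ≤ ∫⁻ ω, ∑' u : Uset ℓ (d := d) m, pathProd m (fun i => u.1 i + z) ω ∂P :=
        lintegral_mono hpoint
    _ = ∑' u : Uset ℓ (d := d) m, ∫⁻ ω, pathProd m (fun i => u.1 i + z) ω ∂P :=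
        lintegral_tsum (fun u => (measurable_pathProd m _).aemeasurable)
    _ = ∑' u : Uset ℓ (d := d) m, ∫⁻ ω, pathProd m u.1 ω ∂P :=
        tsum_congr (fun u => lintegral_pathProd_shift P hC1 m u.1 z)
    _ = ∑' u : Uset ℓ (d := d) m, ann P κ 0 (cyl m u.1) :=
        tsum_congr (fun u => by rw [ann_cyl κ hκ P m u.1, if_pos u.2.2.1, one_mul])
    _ = ann P κ 0 (⋃ u : Uset ℓ (d := d) m, cyl m u.1) :=
        (measure_iUnion hdisjU (fun u => measurableSet_cyl _ _)).symm
    _ ≤ ann P κ 0 (staySet ℓ m) := by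
        apply measure_mono
        rintro X hX
        obtain ⟨⟨u, hu⟩, hXc⟩ := Set.mem_iUnion.1 hX
        intro n hn
        rw [hXc n hn]
        exact hu.2.2 n hn

include hκ in
lemma ann_KK_le (P : Measure (EnvSp d)) [IsProbabilityMeasure P] (hC1 : CondC1 P)
    (t : ℕ) (z : Zd d) :
    ann P κ 0 (KK ℓ t z) ≤ ann P κ 0 (stayAll ℓ) := by
  have h1 : ∀ m, ann P κ 0 (KK ℓ t z) ≤ ann P κ 0 (staySet ℓ m) := by
    intro m
    refine (measure_mono ?_).trans (ann_KKm_le ℓ hκ P hC1 t z m)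
    intro X hX
    exact ⟨hX.1, fun n hn1 _ => hX.2 n hn1⟩
  haveI := ann_isProb κ P (0 : Zd d)
  have h2 : ann P κ 0 (stayAll ℓ) = ⨅ m, ann P κ 0 (staySet ℓ m) := by
    rw [← iInter_staySet]
    apply Directed.measure_iInter
    · exact fun m => (measurableSet_staySet ℓ m).nullMeasurableSet
    · intro a b
      refine ⟨max a b, fun X hX n hn => hX n (le_trans hn (le_max_left a b)),
        fun X hX n hn => hX n (le_trans hn (le_max_right a b))⟩
    · exact ⟨0, measure_ne_top _ _⟩
  rw [h2]
  exact le_iInf h1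

lemma Adir_subset_iUnion_KK :
    Adir ℓ ⊆ ⋃ p : ℕ × Zd d, KK ℓ p.1 p.2 := by
  intro X hX
  have hX' : Tendsto (fun n => dotl (X n) ℓ) atTop atTop := hX
  have hev : ∀ᶠ n in atTop, dotl (X 0) ℓ ≤ dotl (X n) ℓ := hX'.eventually_ge_atTop _
  obtain ⟨N, hN⟩ := eventually_atTop.1 hev
  obtain ⟨t, htmem, htmin⟩ := Finset.exists_min_image (Finset.range (N+1))
    (fun n => dotl (X n) ℓ) ⟨0, Finset.mem_range.2 (by omega)⟩
  refine Set.mem_iUnion.2 ⟨(t, X t), rfl, fun n _ => ?_⟩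
  by_cases hn : n ≤ N
  · exact htmin n (Finset.mem_range.2 (by omega))
  · calc dotl (X t) ℓ ≤ dotl (X 0) ℓ := htmin 0 (Finset.mem_range.2 (by omega))
      _ ≤ dotl (X n) ℓ := hN n (by omega)

end KKsec
end ZOaux


/-- `P⁰(T_{<0} = ∞) ≤ P⁰(B_ℓ) ≤ P⁰(A_ℓ)`, and consequently
`P⁰(A_ℓ) > 0 ↔ P⁰(B_ℓ) > 0`. -/
theorem B_between_T_and_A
    (P : Measure (EnvSp 2)) [IsProbabilityMeasure P]
    (κ : Zd 2 → Kernel (EnvSp 2) (Traj 2)) [∀ x, IsMarkovKernel (κ x)]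
    (hκ : IsQuenched κ)
    (hC1 : CondC1 P) (R : ℝ) (hC2 : CondC2 P R) (hC3 : CondC3 P)
    (ℓ : EuclideanSpace ℝ (Fin 2)) (hℓ : ‖ℓ‖ = 1) :
    ann P κ 0 {X | Tlt ℓ 0 X = ⊤} ≤ ann P κ 0 (Bdir ℓ) ∧
    ann P κ 0 (Bdir ℓ) ≤ ann P κ 0 (Adir ℓ) ∧
    (0 < ann P κ 0 (Adir ℓ) ↔ 0 < ann P κ 0 (Bdir ℓ)) := by
  classical
  haveI := ZOaux.ann_isProb κ P (0 : Zd 2)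
  obtain ⟨e, hepos, hedot⟩ := ZOaux.exists_down P hC3 ℓ hℓ
  set δ : ℝ := -dotl e ℓ with hδdef
  have δpos : 0 < δ := by rw [hδdef]; linarith
  have hδe : dotl e ℓ = -δ := by rw [hδdef]; ring
  -- First inequality
  have hsub1 : {X : Traj 2 | Tlt ℓ 0 X = ⊤} ⊆ Bdir ℓ :=
    fun X hX => ⟨X, Relation.ReflTransGen.refl, hX⟩
  have h1 : ann P κ 0 {X | Tlt ℓ 0 X = ⊤} ≤ ann P κ 0 (Bdir ℓ) := measure_mono hsub1
  -- qualifying predicates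
  set Qa : Zd 2 → ℕ → Traj 2 → Prop := fun y n X => X n = y with hQadef
  set Qb : ℤ → ℕ → Traj 2 → Prop := fun k => ZOaux.PF.QbP ℓ δ k with hQbdef
  have hQa : ∀ y : Zd 2, ∀ m (X Y : Traj 2), (∀ i ≤ m, X i = Y i) → Qa y m X → Qa y m Y := by
    intro y m X Y hag h
    have h' : X m = y := h
    show Y m = y
    rw [← hag m le_rfl]
    exact h'
  have hQb : ∀ k : ℤ, ∀ m (X Y : Traj 2), (∀ i ≤ m, X i = Y i) → Qb k m X → Qb k m Y := by
    intro k m X Y hag h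
    have h' : ZOaux.PF.QbP ℓ δ k m X := h
    show ZOaux.PF.QbP ℓ δ k m Y
    constructor
    · intro i hi
      rw [← hag i (le_of_lt hi), ← hag m le_rfl]
      exact h'.1 i hi
    · rw [← hag m le_rfl]
      exact h'.2
  -- null bad sets : quenched (case a)
  have hNa : ∀ y : Zd 2, ann P κ 0 (ZOaux.BadSet e (Qa y)) = 0 := by
    intro y
    rw [ZOaux.ann_apply κ P 0 (ZOaux.measurableSet_BadSet)]
    have hae : ∀ᵐ ω ∂P, 0 < ω.1 y (y + e) := ZOaux.site_pos P hC1 y e hepos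
    have h0 : ∀ᵐ ω ∂P, (κ 0) ω (ZOaux.BadSet e (Qa y)) = 0 := by
      filter_upwards [hae] with ω hω
      refine ZOaux.measure_BadSet_null (hQa y) ((κ 0) ω)
        (ENNReal.ofReal (ω.1 y (y + e))) (ENNReal.ofReal_pos.2 hω)
        (ENNReal.ofReal_le_one.2 (ZOaux.entry_le_one ω _ _)) ?_
      intro m w _ hq
      rw [ZOaux.kernel_step κ hκ 0 ω m w (w m + e)]
      have hwm : w m = y := hq
      rw [hwm, mul_comm]
    rw [lintegral_congr_ae h0, lintegral_zero]
  -- null bad sets : annealed (case b)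
  have hNb : ∀ k : ℤ, ann P κ 0 (ZOaux.BadSet e (Qb k)) = 0 := by
    intro k
    refine ZOaux.measure_BadSet_null (hQb k) (ann P κ 0) (ZOaux.eps0 P e)
      (ZOaux.eps0_pos P e hepos) (ZOaux.eps0_le_one P e) ?_
    intro m w _ hq
    have hfr : ∀ i < m, w i ≠ w m := hq.1
    have := ZOaux.ann_fresh_step κ hκ P hC1 e m w hfr
    rw [this]
    exact le_rfl
  -- the global null set
  set NB : Set (Traj 2) :=
    (⋃ y : Zd 2, ZOaux.BadSet e (Qa y)) ∪ ⋃ k : ℤ, ZOaux.BadSet e (Qb k) with hNBdef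
  have hNB : ann P κ 0 NB = 0 := by
    rw [hNBdef]
    refine measure_union_null ?_ ?_ <;> rw [measure_iUnion_null_iff]
    · exact hNa
    · exact hNb
  -- Second inequality, via the pathwise dichotomy
  have hsub2 : Bdir ℓ ⊆ Adir ℓ ∪ NB := by
    intro X hX
    by_cases hA : X ∈ Adir ℓ
    · exact Or.inl hA
    · refine Or.inr ?_
      by_contra hXNB
      have hXa : ∀ y : Zd 2, X ∉ ZOaux.BadSet e (Qa y) := by
        intro y hy
        exact hXNB (Or.inl (Set.mem_iUnion.2 ⟨y, hy⟩))
      have hXb : ∀ k : ℤ, X ∉ ZOaux.BadSet e (Qb k) := by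
        intro k hk
        exact hXNB (Or.inr (Set.mem_iUnion.2 ⟨k, hk⟩))
      have hev : ∀ᶠ n in atTop, 0 ≤ dotl (X n) ℓ := ZOaux.Bdir_subset_ev ℓ hX
      refine ZOaux.PF.path_false e hδe δpos hev hA ?_ ?_
      · intro y hinf
        by_contra hfin
        exact hXa y (ZOaux.bad_subset (hQa y) ⟨hinf, Set.not_infinite.1 hfin⟩)
      · intro k hinf
        by_contra hfin
        exact hXb k (ZOaux.bad_subset (hQb k) ⟨hinf, Set.not_infinite.1 hfin⟩)
  have h2 : ann P κ 0 (Bdir ℓ) ≤ ann P κ 0 (Adir ℓ) := by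
    calc ann P κ 0 (Bdir ℓ) ≤ ann P κ 0 (Adir ℓ ∪ NB) := measure_mono hsub2
      _ ≤ ann P κ 0 (Adir ℓ) + ann P κ 0 NB := measure_union_le _ _
      _ = ann P κ 0 (Adir ℓ) := by rw [hNB, add_zero]
  -- Third part
  have hstayT : ZOaux.stayAll ℓ = {X : Traj 2 | Tlt ℓ 0 X = ⊤} := by
    ext X
    rw [Set.mem_setOf_eq, ZOaux.Tlt_top_iff]
    rfl
  refine ⟨h1, h2, ?_, fun hB => lt_of_lt_of_le hB h2⟩
  intro hA
  by_contra hB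
  have hB0 : ann P κ 0 (Bdir ℓ) = 0 := le_zero_iff.1 (not_lt.1 hB)
  have hT0 : ann P κ 0 {X : Traj 2 | Tlt ℓ 0 X = ⊤} = 0 :=
    le_zero_iff.1 (h1.trans_eq hB0)
  have hKK0 : ∀ p : ℕ × Zd 2, ann P κ 0 (ZOaux.KK ℓ p.1 p.2) = 0 := by
    intro p
    refine le_zero_iff.1 ?_
    refine (ZOaux.ann_KK_le ℓ hκ P hC1 p.1 p.2).trans ?_
    rw [hstayT, hT0]
  have hA0 : ann P κ 0 (Adir ℓ) = 0 := by
    refine le_zero_iff.1 ?_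
    calc ann P κ 0 (Adir ℓ) ≤ ann P κ 0 (⋃ p : ℕ × Zd 2, ZOaux.KK ℓ p.1 p.2) :=
          measure_mono (ZOaux.Adir_subset_iUnion_KK ℓ)
      _ ≤ ∑' p : ℕ × Zd 2, ann P κ 0 (ZOaux.KK ℓ p.1 p.2) := measure_iUnion_le _
      _ = 0 := by simp [hKK0]
  rw [hA0] at hA
  exact lt_irrefl 0 hA
end
end

section
/- Let 𝐏 be a probability measure on environments on ℤ² satisfying (C1), (C2), and (C3), let ℓ be a unit vector in ℝ², and assume P⁰(A_ℓ ∪ A_{−ℓ}) = 1. Then lim_{L→∞} P⁰(B_ℓ △ G_0^L) = 0, where △ denotes symmetric difference of events. In particular, lim_{L→∞} P⁰(G_0^L) = P⁰(B_ℓ). -/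
open MeasureTheory ProbabilityTheory Filter Topology

noncomputable section

namespace RWRE

open Relation

variable {α : Type*}

/-! ### Loop erasures as lists -/

def eraseF (m n : ℕ) (X : ℕ → α) : ℕ → α := fun i => if i < m then X i else X (i + (n - m))

def applyL : List (ℕ × ℕ) → (ℕ → α) → (ℕ → α)
  | [], X => X
  | p :: l, X => applyL l (eraseF p.1 p.2 X)

def validL : List (ℕ × ℕ) → (ℕ → α) → Prop
  | [], _ => True
  | p :: l, X => p.1 < p.2 ∧ X p.1 = X p.2 ∧ validL l (eraseF p.1 p.2 X)

lemma chain_iff_list {X Y : ℕ → α} :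
    Relation.ReflTransGen EraseOne X Y ↔ ∃ l, validL l X ∧ Y = applyL l X := by
  constructor
  · intro h
    induction h using Relation.ReflTransGen.head_induction_on with
    | refl => exact ⟨[], trivial, rfl⟩
    | head hstep _ ih =>
      obtain ⟨m, n, hmn, hloop, hY⟩ := hstep
      obtain ⟨l, hv, he⟩ := ih
      subst hY
      exact ⟨(m, n) :: l, ⟨hmn, hloop, hv⟩, he⟩
  · rintro ⟨l, hv, rfl⟩
    induction l generalizing X with
    | nil => exact .refl
    | cons p l ih =>
      obtain ⟨h1, h2, h3⟩ := hv
      exact Relation.ReflTransGen.head ⟨p.1, p.2, h1, h2, rfl⟩ (ih h3)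

/-! ### hitTime lemmas -/

lemma hitTime_le {A : Set α} {X : ℕ → α} {k : ℕ} (h : X k ∈ A) : hitTime A X ≤ k :=
  iInf₂_le k h

lemma le_hitTime {A : Set α} {X : ℕ → α} {c : ℕ∞} (h : ∀ k : ℕ, X k ∈ A → c ≤ k) :
    c ≤ hitTime A X := le_iInf₂ h

lemma hitTime_eq_top {A : Set α} {X : ℕ → α} : hitTime A X = ⊤ ↔ ∀ k, X k ∉ A := by
  simp [hitTime, iInf_eq_top]

lemma hitTime_le_coe {A : Set α} {X : ℕ → α} {k : ℕ} :
    hitTime A X ≤ k ↔ ∃ j ≤ k, X j ∈ A := by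
  constructor
  · intro h
    by_contra hc
    push_neg at hc
    have : (k : ℕ∞) + 1 ≤ hitTime A X := by
      refine le_hitTime fun j hj => ?_
      have : k < j := by
        by_contra hk
        exact hc j (by omega) hj
      exact_mod_cast by exact_mod_cast Nat.succ_le_of_lt this
    have h2 := this.trans h
    have h3 : k + 1 ≤ k := by exact_mod_cast h2
    omega
  · rintro ⟨j, hj, hja⟩
    exact (hitTime_le hja).trans (by exact_mod_cast hj)

lemma hitTime_eq_coe {A : Set α} {X : ℕ → α} {t : ℕ} :
    hitTime A X = t ↔ X t ∈ A ∧ ∀ j < t, X j ∉ A := by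
  constructor
  · intro h
    have h1 : ∃ j ≤ t, X j ∈ A := hitTime_le_coe.mp h.le
    constructor
    · obtain ⟨j, hj, hja⟩ := h1
      rcases eq_or_lt_of_le hj with rfl | hlt
      · exact hja
      · exfalso
        have := hitTime_le hja
        rw [h] at this
        exact absurd (by exact_mod_cast this) (by omega)
    · intro j hj hja
      have := hitTime_le hja
      rw [h] at this
      exact absurd (by exact_mod_cast this) (by omega)
  · rintro ⟨h1, h2⟩
    refine le_antisymm (hitTime_le h1) (le_hitTime fun j hj => ?_)
    have : t ≤ j := by
      by_contra hc
      exact h2 j (by omega) hj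
    exact_mod_cast this

lemma hitTime_lt_hitTime {A B : Set α} {X : ℕ → α} :
    hitTime A X < hitTime B X ↔ ∃ k, X k ∈ A ∧ ∀ j ≤ k, X j ∉ B := by
  constructor
  · intro h
    have hne : hitTime A X ≠ ⊤ := h.ne_top
    have hex : ∃ k, X k ∈ A := by
      by_contra hc
      push_neg at hc
      exact hne (hitTime_eq_top.mpr hc)
    obtain ⟨k, hk⟩ := hex
    lift hitTime A X to ℕ using hne with t ht
    have hspec := hitTime_eq_coe.mp ht.symm
    refine ⟨t, hspec.1, fun j hj hjB => ?_⟩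
    have := hitTime_le hjB
    have : hitTime B X ≤ (t : ℕ∞) := this.trans (by exact_mod_cast hj)
    exact absurd (this.trans_lt h) (lt_irrefl _)
  · rintro ⟨k, hkA, hkB⟩
    have h1 : hitTime A X ≤ k := hitTime_le hkA
    have h2 : (k : ℕ∞) < hitTime B X := by
      rcases lt_or_ge (k : ℕ∞) (hitTime B X) with h | h
      · exact h
      · obtain ⟨j, hj, hjB⟩ := hitTime_le_coe.mp h
        exact absurd hjB (hkB j hj)
    exact h1.trans_lt h2

/-! ### stopped at a finite time -/

lemma stopped_coe {X : ℕ → α} {t : ℕ} :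
    stopped X (t : ℕ∞) = fun n => if n < t then X n else X t := by
  funext n
  simp only [stopped, ENat.toNat_coe, Nat.cast_lt]

/-! ### Lemma C : transferring a chain to the stopped path -/

lemma chainC {X Y : ℕ → α} (h : Relation.ReflTransGen EraseOne X Y) :
    ∃ c N : ℕ, (∀ i, N ≤ i → Y i = X (i + c)) ∧
      ∀ T : ℕ, N + c < T →
        Relation.ReflTransGen EraseOne (stopped X (T : ℕ∞)) (stopped Y ((T - c : ℕ) : ℕ∞)) := by
  induction h with
  | refl =>
    refine ⟨0, 0, fun i _ => rfl, fun T _ => ?_⟩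
    simp only [Nat.sub_zero]
    exact .refl
  | tail hab hstep ih =>
    rename_i b Z
    obtain ⟨m, n, hmn, hloop, hZ⟩ := hstep
    obtain ⟨c, N, hev, htr⟩ := ih
    refine ⟨c + (n - m), N + n + 1, ?_, ?_⟩
    · intro i hi
      have him : m ≤ i := by omega
      have : Z i = b (i + (n - m)) := by
        rw [hZ]; simp [if_neg (by omega : ¬ i < m)]
      rw [this, hev _ (by omega)]
      congr 1
      omega
    · intro T hT
      have h1 : Relation.ReflTransGen EraseOne (stopped X (T : ℕ∞))
          (stopped b ((T - c : ℕ) : ℕ∞)) := htr T (by omega)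
      refine h1.tail ?_
      set t := T - c with htdef
      have hnt : n < t := by omega
      refine ⟨m, n, hmn, ?_, ?_⟩
      · rw [stopped_coe]
        simp only [if_pos (by omega : m < t), if_pos hnt]
        exact hloop
      · rw [stopped_coe, stopped_coe]
        funext i
        have ht' : T - (c + (n - m)) = t - (n - m) := by omega
        rw [ht']
        by_cases him : i < m
        · simp only [hZ, if_pos him, if_pos (show i < t - (n - m) by omega),
            if_pos (show i < t by omega)]
        · by_cases hit : i < t - (n - m)
          · simp only [hZ, if_neg him, if_pos hit, if_pos (show i + (n - m) < t by omega)]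
          · simp only [hZ, if_neg him, if_neg hit, if_neg (show ¬ i + (n - m) < t by omega),
              if_neg (show ¬ t - (n - m) < m by omega)]
            congr 1
            omega

/-! ### Lemma A : pulling back erasures of the stopped path -/

lemma lemA {d : ℕ} {ℓ : EuclideanSpace ℝ (Fin d)} {X : Traj d} {T : ℕ} {L : ℝ}
    (hT : L ≤ dotl (X T) ℓ) (hlt : ∀ n < T, dotl (X n) ℓ < L)
    {Z : Traj d} (h : Relation.ReflTransGen EraseOne (stopped X (T : ℕ∞)) Z) :
    ∃ (Y : Traj d) (S : ℕ), Relation.ReflTransGen EraseOne X Y ∧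
      (∀ i, i < S → Z i = Y i ∧ dotl (Y i) ℓ < L) ∧
      (∀ i, S ≤ i → Z i = X T) ∧ (∀ j, Y (S + j) = X (T + j)) := by
  induction h with
  | refl =>
    refine ⟨X, T, .refl, ?_, ?_, fun j => rfl⟩
    · intro i hi
      rw [stopped_coe]
      exact ⟨if_pos hi, hlt i hi⟩
    · intro i hi
      rw [stopped_coe]
      simp [if_neg (by omega : ¬ i < T)]
  | tail hab hstep ih =>
    rename_i b Z
    obtain ⟨m, n, hmn, hloop, hZ⟩ := hstep
    obtain ⟨Y, S, hchain, hpre, hpost, hsfx⟩ := ih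
    rcases lt_or_ge n S with hnS | hSn
    · -- loop entirely inside the prefix
      refine ⟨fun i => if i < m then Y i else Y (i + (n - m)), S - (n - m),
        hchain.tail ⟨m, n, hmn, ?_, rfl⟩, ?_, ?_, ?_⟩
      · rw [← (hpre m (by omega)).1, ← (hpre n (by omega)).1]
        exact hloop
      · intro i hi
        by_cases him : i < m
        · simp only [if_pos him]
          rw [hZ]
          simp only [if_pos him]
          exact hpre i (by omega)
        · simp only [if_neg him]
          rw [hZ]
          simp only [if_neg him]
          exact hpre _ (by omega)
      · intro i hi
        rw [hZ]
        simp only [if_neg (by omega : ¬ i < m)]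
        exact hpost _ (by omega)
      · intro j
        simp only [if_neg (by omega : ¬ S - (n - m) + j < m)]
        have : S - (n - m) + j + (n - m) = S + j := by omega
        rw [this]
        exact hsfx j
    · rcases lt_or_ge m S with hmS | hSm
      · -- impossible: loop from inside prefix to the stopped part
        exfalso
        have h1 : b m = Y m := (hpre m hmS).1
        have h2 : dotl (Y m) ℓ < L := (hpre m hmS).2
        have h3 : b n = X T := hpost n hSn
        rw [hloop, h3] at h1
        rw [← h1] at h2
        linarith
      · -- loop entirely in the stopped part
        refine ⟨Y, S, hchain, ?_, ?_, hsfx⟩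
        · intro i hi
          rw [hZ]
          simp only [if_pos (by omega : i < m)]
          exact hpre i hi
        · intro i hi
          rw [hZ]
          by_cases him : i < m
          · simp only [if_pos him]
            exact hpost i hi
          · simp only [if_neg him]
            exact hpost _ (by omega)


/-! ### rfl-lemmas for hitting times -/

lemma Tlt_def {d : ℕ} (ℓ : EuclideanSpace ℝ (Fin d)) (a : ℝ) :
    Tlt ℓ a = hitTime {x | dotl x ℓ < a} := rfl

lemma Tge_def {d : ℕ} (ℓ : EuclideanSpace ℝ (Fin d)) (a : ℝ) :
    Tge ℓ a = hitTime {x | a ≤ dotl x ℓ} := rfl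

lemma bound_exists {d : ℕ} (ℓ : EuclideanSpace ℝ (Fin d)) (X : Traj d) (N : ℕ) :
    ∃ M : ℝ, ∀ n ≤ N, dotl (X n) ℓ ≤ M := by
  refine ⟨(Finset.range (N + 1)).sup' (Finset.nonempty_range_iff.mpr (Nat.succ_ne_zero N))
    (fun n => dotl (X n) ℓ), fun n hn => ?_⟩
  exact Finset.le_sup' (fun n => dotl (X n) ℓ) (Finset.mem_range.mpr (Nat.lt_succ_of_le hn))

section Det

variable {d : ℕ} {ℓ : EuclideanSpace ℝ (Fin d)} {X : Traj d}

lemma det_fwd (hX : X ∈ Adir ℓ) (hB : X ∈ Bdir ℓ) :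
    ∃ L₁ : ℝ, 1 ≤ L₁ ∧ ∀ L, L₁ ≤ L → X ∈ Gset ℓ 0 L := by
  obtain ⟨Y, hYchain, hYtop⟩ := hB
  rw [Tlt_def] at hYtop
  have hY0 : ∀ k, ¬ dotl (Y k) ℓ < 0 := fun k => hitTime_eq_top.mp hYtop k
  obtain ⟨c, N, hev, htr⟩ := chainC hYchain
  obtain ⟨M, hM⟩ := bound_exists ℓ X (N + c)
  refine ⟨max 1 (M + 1), le_max_left _ _, fun L hL => ?_⟩
  have hL1 : (1:ℝ) ≤ L := le_trans (le_max_left _ _) hL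
  have hLM : M + 1 ≤ L := le_trans (le_max_right _ _) hL
  have hgefin : Tge ℓ L X ≠ ⊤ := by
    obtain ⟨n, hn⟩ := (hX.eventually_ge_atTop L).exists
    rw [Tge_def]
    intro h
    exact (hitTime_eq_top.mp h n) hn
  rw [Gset, if_pos (by linarith : (0:ℝ) < L)]
  simp only [Set.mem_setOf_eq]
  refine ⟨hgefin, ?_⟩
  rw [Tge_def] at hgefin ⊢
  lift hitTime {x | L ≤ dotl x ℓ} X to ℕ using hgefin with t ht
  have hspec := hitTime_eq_coe.mp ht.symm
  have hXt : L ≤ dotl (X t) ℓ := hspec.1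
  have htbig : N + c < t := by
    by_contra hc
    have := hM t (by omega)
    linarith
  refine ⟨stopped Y ((t - c : ℕ) : ℕ∞), htr t htbig, ?_⟩
  rw [Tlt_def]
  refine hitTime_lt_hitTime.mpr ⟨t - c, ?_, ?_⟩
  · rw [stopped_coe]
    simp only [Set.mem_setOf_eq, if_neg (lt_irrefl (t - c))]
    have h1 : Y (t - c) = X (t - c + c) := hev (t - c) (by omega)
    rw [h1, show t - c + c = t by omega]
    exact hXt
  · intro j _ hj
    rw [stopped_coe] at hj
    simp only [Set.mem_setOf_eq] at hj
    split_ifs at hj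
    · exact hY0 j hj
    · exact hY0 (t - c) hj

lemma det_bwd (hX : X ∈ Adir ℓ) :
    ∃ L₂ : ℝ, 1 ≤ L₂ ∧ ∀ L, L₂ ≤ L → X ∈ Gset ℓ 0 L → X ∈ Bdir ℓ := by
  obtain ⟨N₀, hN₀⟩ := eventually_atTop.mp (hX.eventually_ge_atTop 0)
  obtain ⟨M, hM⟩ := bound_exists ℓ X N₀
  refine ⟨max 1 (M + 1), le_max_left _ _, fun L hL hG => ?_⟩
  have hL1 : (1:ℝ) ≤ L := le_trans (le_max_left _ _) hL
  have hLM : M + 1 ≤ L := le_trans (le_max_right _ _) hL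
  rw [Gset, if_pos (by linarith : (0:ℝ) < L)] at hG
  simp only [Set.mem_setOf_eq] at hG
  obtain ⟨hne, Z, hZchain, hZlt⟩ := hG
  rw [Tge_def] at hne hZchain hZlt
  lift hitTime {x | L ≤ dotl x ℓ} X to ℕ using hne with t ht
  have hspec := hitTime_eq_coe.mp ht.symm
  have hXt : L ≤ dotl (X t) ℓ := hspec.1
  have hlt : ∀ n < t, dotl (X n) ℓ < L := by
    intro n hn
    have := hspec.2 n hn
    simpa using not_le.mp (by simpa using this)
  have htN₀ : N₀ < t := by
    by_contra hc
    have := hM t (by omega)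
    linarith
  obtain ⟨Y, S, hchain, hpre, hpost, hsfx⟩ := lemA hXt hlt hZchain
  rw [Tlt_def] at hZlt
  obtain ⟨k, hkA, hkB⟩ := hitTime_lt_hitTime.mp hZlt
  simp only [Set.mem_setOf_eq] at hkA
  have hSk : S ≤ k := by
    by_contra hc
    have h1 := (hpre k (by omega)).1
    have h2 := (hpre k (by omega)).2
    rw [h1] at hkA
    linarith
  refine ⟨Y, hchain, ?_⟩
  rw [Tlt_def]
  refine hitTime_eq_top.mpr fun i hi => ?_
  simp only [Set.mem_setOf_eq] at hi
  rcases lt_or_ge i S with hiS | hSi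
  · have h1 := (hpre i hiS).1
    have := hkB i (by omega)
    simp only [Set.mem_setOf_eq] at this
    rw [h1] at this
    exact this hi
  · have h1 : Y i = X (t + (i - S)) := by
      have h2 := hsfx (i - S)
      rwa [show S + (i - S) = i by omega] at h2
    rw [h1] at hi
    have := hN₀ (t + (i - S)) (by omega)
    linarith

lemma det_neg (hX : X ∈ AdirNeg ℓ) :
    X ∉ Bdir ℓ ∧ ∃ L₀ : ℝ, 1 ≤ L₀ ∧ ∀ L, L₀ ≤ L → X ∉ Gset ℓ 0 L := by
  constructor
  · rintro ⟨Y, hch, htop⟩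
    rw [Tlt_def] at htop
    obtain ⟨c, N, hev, _⟩ := chainC hch
    obtain ⟨N₁, hN₁⟩ := eventually_atTop.mp (hX.eventually_le_atBot (-1))
    set i := max N N₁ with hi
    have h1 : Y i = X (i + c) := hev i (le_max_left _ _)
    have h2 : dotl (X (i + c)) ℓ ≤ -1 := hN₁ _ (by omega)
    exact (hitTime_eq_top.mp htop i) (by rw [Set.mem_setOf_eq, h1]; linarith)
  · obtain ⟨N₁, hN₁⟩ := eventually_atTop.mp (hX.eventually_le_atBot 0)
    obtain ⟨M, hM⟩ := bound_exists ℓ X N₁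
    refine ⟨max 1 (M + 1), le_max_left _ _, fun L hL hG => ?_⟩
    have hL1 : (1:ℝ) ≤ L := le_trans (le_max_left _ _) hL
    have hLM : M + 1 ≤ L := le_trans (le_max_right _ _) hL
    rw [Gset, if_pos (by linarith : (0:ℝ) < L)] at hG
    simp only [Set.mem_setOf_eq] at hG
    refine hG.1 ?_
    rw [Tge_def]
    refine hitTime_eq_top.mpr fun n hn => ?_
    simp only [Set.mem_setOf_eq] at hn
    rcases le_or_gt n N₁ with h | h
    · have := hM n h
      linarith
    · have := hN₁ n h.le
      linarith

lemma det_main (hXD : X ∈ Adir ℓ ∪ AdirNeg ℓ) :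
    ∃ L₀ : ℝ, 1 ≤ L₀ ∧ ∀ L, L₀ ≤ L → X ∉ symmDiff (Bdir ℓ) (Gset ℓ 0 L) := by
  rcases hXD with hX | hX
  · by_cases hB : X ∈ Bdir ℓ
    · obtain ⟨L₁, h1, hf⟩ := det_fwd hX hB
      refine ⟨L₁, h1, fun L hL hmem => ?_⟩
      rcases Set.mem_symmDiff.mp hmem with ⟨_, h⟩ | ⟨_, h⟩
      · exact h (hf L hL)
      · exact h hB
    · obtain ⟨L₂, h1, hbw⟩ := det_bwd hX
      refine ⟨L₂, h1, fun L hL hmem => ?_⟩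
      rcases Set.mem_symmDiff.mp hmem with ⟨h, _⟩ | ⟨h, _⟩
      · exact hB h
      · exact hB (hbw L hL h)
  · obtain ⟨hnB, L₀, h1, hnG⟩ := det_neg hX
    refine ⟨L₀, h1, fun L hL hmem => ?_⟩
    rcases Set.mem_symmDiff.mp hmem with ⟨h, _⟩ | ⟨h, _⟩
    · exact hnB h
    · exact hnG L hL h

end Det


/-! ### Measurability -/

section Meas

variable {d : ℕ}

lemma measSet_zd (s : Set (Zd d)) : MeasurableSet s := s.to_countable.measurableSet

lemma measurable_eraseF (m n : ℕ) : Measurable (eraseF m n : Traj d → Traj d) := by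
  refine measurable_pi_lambda _ fun i => ?_
  simp only [eraseF]
  split_ifs
  · exact measurable_pi_apply _
  · exact measurable_pi_apply _

lemma measurable_applyL (l : List (ℕ × ℕ)) : Measurable (applyL l : Traj d → Traj d) := by
  induction l with
  | nil => exact measurable_id
  | cons p l ih => exact ih.comp (measurable_eraseF p.1 p.2)

lemma measurableSet_eqcoord (a b : ℕ) : MeasurableSet {X : Traj d | X a = X b} := by
  have : {X : Traj d | X a = X b} =
      ⋃ v : Zd d, ((fun X : Traj d => X a) ⁻¹' {v}) ∩ ((fun X : Traj d => X b) ⁻¹' {v}) := by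
    ext X
    simp only [Set.mem_setOf_eq, Set.mem_iUnion, Set.mem_inter_iff, Set.mem_preimage,
      Set.mem_singleton_iff]
    constructor
    · intro h; exact ⟨X b, h, rfl⟩
    · rintro ⟨v, h1, h2⟩; rw [h1, h2]
  rw [this]
  exact MeasurableSet.iUnion fun v =>
    ((measurable_pi_apply a) (measurableSet_singleton v)).inter
      ((measurable_pi_apply b) (measurableSet_singleton v))

lemma measurableSet_validL (l : List (ℕ × ℕ)) : MeasurableSet {X : Traj d | validL l X} := by
  induction l with
  | nil =>
    have : {X : Traj d | validL [] X} = Set.univ := by ext X; simp [validL]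
    rw [this]; exact MeasurableSet.univ
  | cons p l ih =>
    have : {X : Traj d | validL (p :: l) X} =
        {X : Traj d | p.1 < p.2} ∩ ({X : Traj d | X p.1 = X p.2} ∩
          (eraseF p.1 p.2) ⁻¹' {W : Traj d | validL l W}) := by
      ext X
      simp only [validL, Set.mem_setOf_eq, Set.mem_inter_iff, Set.mem_preimage]
    rw [this]
    exact (MeasurableSet.const _).inter ((measurableSet_eqcoord p.1 p.2).inter
      ((measurable_eraseF p.1 p.2) ih))

lemma measurableSet_Bdir (ℓ : EuclideanSpace ℝ (Fin d)) : MeasurableSet (Bdir ℓ) := by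
  have : Bdir ℓ = ⋃ l : List (ℕ × ℕ), {X : Traj d | validL l X} ∩
      ⋂ k : ℕ, (fun X : Traj d => applyL l X k) ⁻¹' {x : Zd d | ¬ dotl x ℓ < 0} := by
    ext X
    simp only [Bdir, Set.mem_setOf_eq, Set.mem_iUnion, Set.mem_inter_iff, Set.mem_iInter,
      Set.mem_preimage]
    constructor
    · rintro ⟨Y, hch, htop⟩
      rw [Tlt_def] at htop
      obtain ⟨l, hv, he⟩ := chain_iff_list.mp hch
      refine ⟨l, hv, fun k => ?_⟩
      have := hitTime_eq_top.mp htop k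
      rw [he] at this
      exact this
    · rintro ⟨l, hv, hk⟩
      refine ⟨applyL l X, chain_iff_list.mpr ⟨l, hv, rfl⟩, ?_⟩
      rw [Tlt_def]
      exact hitTime_eq_top.mpr fun k hmem => hk k hmem
  rw [this]
  exact MeasurableSet.iUnion fun l => (measurableSet_validL l).inter
    (MeasurableSet.iInter fun k =>
      ((measurable_pi_apply k).comp (measurable_applyL l)) (measSet_zd _))

lemma measurable_stoppedFun (t : ℕ) : Measurable (fun X : Traj d => stopped X (t : ℕ∞)) := by
  refine measurable_pi_lambda _ fun n => ?_
  have : (fun X : Traj d => stopped X (t : ℕ∞) n) =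
      fun X : Traj d => if n < t then X n else X t := by
    funext X
    rw [stopped_coe]
  rw [this]
  split_ifs
  · exact measurable_pi_apply _
  · exact measurable_pi_apply _

lemma measurableSet_Gset (ℓ : EuclideanSpace ℝ (Fin d)) {L : ℝ} (hL : 0 < L) :
    MeasurableSet (Gset ℓ 0 L) := by
  classical
  set U : Set (Traj d) := {W | ∃ Z ∈ LoopErasures W, Tge ℓ L Z < Tlt ℓ 0 Z} with hU
  have hUmeas : MeasurableSet U := by
    have : U = ⋃ l : List (ℕ × ℕ), {W : Traj d | validL l W} ∩
        ⋃ k : ℕ, (((fun W : Traj d => applyL l W k) ⁻¹' {x : Zd d | L ≤ dotl x ℓ}) ∩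
          ⋂ j : ℕ, ⋂ (_ : j ≤ k),
            (fun W : Traj d => applyL l W j) ⁻¹' {x : Zd d | ¬ dotl x ℓ < 0}) := by
      ext W
      simp only [hU, Set.mem_setOf_eq, Set.mem_iUnion, Set.mem_inter_iff, Set.mem_iInter,
        Set.mem_preimage]
      constructor
      · rintro ⟨Z, hch, hlt⟩
        obtain ⟨l, hv, he⟩ := chain_iff_list.mp hch
        rw [Tge_def, Tlt_def, he] at hlt
        obtain ⟨k, hkA, hkB⟩ := hitTime_lt_hitTime.mp hlt
        exact ⟨l, hv, k, hkA, fun j hj => hkB j hj⟩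
      · rintro ⟨l, hv, k, hkA, hkB⟩
        refine ⟨applyL l W, chain_iff_list.mpr ⟨l, hv, rfl⟩, ?_⟩
        rw [Tge_def, Tlt_def]
        exact hitTime_lt_hitTime.mpr ⟨k, hkA, fun j hj => hkB j hj⟩
    rw [this]
    exact MeasurableSet.iUnion fun l => (measurableSet_validL l).inter
      (MeasurableSet.iUnion fun k =>
        (((measurable_pi_apply k).comp (measurable_applyL l)) (measSet_zd _)).inter
          (MeasurableSet.iInter fun j => MeasurableSet.iInter fun _ =>
            ((measurable_pi_apply j).comp (measurable_applyL l)) (measSet_zd _)))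
  rw [Gset, if_pos hL]
  have : {X : Traj d | Tge ℓ L X ≠ ⊤ ∧
      ∃ Y ∈ LoopErasures (stopped X (Tge ℓ L X)), Tge ℓ L Y < Tlt ℓ 0 Y} =
      ⋃ t : ℕ, ((((fun X : Traj d => X t) ⁻¹' {x : Zd d | L ≤ dotl x ℓ}) ∩
        ⋂ j : ℕ, ⋂ (_ : j < t), (fun X : Traj d => X j) ⁻¹' {x : Zd d | ¬ L ≤ dotl x ℓ}) ∩
        ((fun X : Traj d => stopped X (t : ℕ∞)) ⁻¹' U)) := by
    ext X
    simp only [Set.mem_setOf_eq, Set.mem_iUnion, Set.mem_inter_iff, Set.mem_iInter,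
      Set.mem_preimage, hU]
    constructor
    · rintro ⟨hne, hex⟩
      rw [Tge_def] at hne hex
      lift hitTime {x | L ≤ dotl x ℓ} X to ℕ using hne with t ht
      have hspec := hitTime_eq_coe.mp ht.symm
      refine ⟨t, ⟨hspec.1, fun j hj => hspec.2 j hj⟩, ?_⟩
      simpa [Tge_def] using hex
    · rintro ⟨t, ⟨h1, h2⟩, h3⟩
      have ht : Tge ℓ L X = (t : ℕ∞) := by
        rw [Tge_def]
        exact hitTime_eq_coe.mpr ⟨h1, fun j hj => h2 j hj⟩
      rw [ht]
      exact ⟨by simp, h3⟩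
  rw [this]
  refine MeasurableSet.iUnion fun t => (MeasurableSet.inter (MeasurableSet.inter ?_ ?_) ?_)
  · exact (measurable_pi_apply t) (measSet_zd {x : Zd d | L ≤ dotl x ℓ})
  · exact MeasurableSet.iInter fun j => MeasurableSet.iInter fun _ =>
      (measurable_pi_apply j) (measSet_zd {x : Zd d | ¬ L ≤ dotl x ℓ})
  · exact (measurable_stoppedFun t) hUmeas

lemma measurableSet_Adir (ℓ : EuclideanSpace ℝ (Fin d)) : MeasurableSet (Adir ℓ) := by
  have : Adir ℓ = ⋂ M : ℕ, ⋃ N : ℕ, ⋂ n : ℕ, ⋂ (_ : N ≤ n),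
      (fun X : Traj d => X n) ⁻¹' {x : Zd d | (M : ℝ) ≤ dotl x ℓ} := by
    ext X
    simp only [Adir, Set.mem_setOf_eq, Set.mem_iInter, Set.mem_iUnion, Set.mem_preimage]
    constructor
    · intro h M
      exact eventually_atTop.mp (h.eventually_ge_atTop (M : ℝ))
    · intro h
      refine tendsto_atTop_atTop.mpr fun b => ?_
      obtain ⟨M, hM⟩ := exists_nat_ge b
      obtain ⟨N, hN⟩ := h M
      exact ⟨N, fun n hn => le_trans hM (hN n hn)⟩
  rw [this]
  exact MeasurableSet.iInter fun M => MeasurableSet.iUnion fun N =>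
    MeasurableSet.iInter fun n => MeasurableSet.iInter fun _ =>
      (measurable_pi_apply n) (measSet_zd {x : Zd d | (M : ℝ) ≤ dotl x ℓ})

lemma measurableSet_AdirNeg (ℓ : EuclideanSpace ℝ (Fin d)) : MeasurableSet (AdirNeg ℓ) := by
  have : AdirNeg ℓ = ⋂ M : ℕ, ⋃ N : ℕ, ⋂ n : ℕ, ⋂ (_ : N ≤ n),
      (fun X : Traj d => X n) ⁻¹' {x : Zd d | dotl x ℓ ≤ -(M : ℝ)} := by
    ext X
    simp only [AdirNeg, Set.mem_setOf_eq, Set.mem_iInter, Set.mem_iUnion, Set.mem_preimage]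
    constructor
    · intro h M
      exact eventually_atTop.mp (h.eventually_le_atBot (-(M : ℝ)))
    · intro h
      refine tendsto_atTop_atBot.mpr fun b => ?_
      obtain ⟨M, hM⟩ := exists_nat_ge (-b)
      obtain ⟨N, hN⟩ := h M
      exact ⟨N, fun n hn => le_trans (hN n hn) (by linarith)⟩
  rw [this]
  exact MeasurableSet.iInter fun M => MeasurableSet.iUnion fun N =>
    MeasurableSet.iInter fun n => MeasurableSet.iInter fun _ =>
      (measurable_pi_apply n) (measSet_zd {x : Zd d | dotl x ℓ ≤ -(M : ℝ)})

end Meas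

end RWRE

/-- Equations (246) and (243) of the paper: assuming `P⁰(A_ℓ ∪ A_{-ℓ}) = 1`,
`lim_{L→∞} P⁰(B_ℓ △ G_0^L) = 0`, and in particular
`lim_{L→∞} P⁰(G_0^L) = P⁰(B_ℓ)`. -/
theorem B_symmDiff_G_vanishes
    (P : Measure (EnvSp 2)) [IsProbabilityMeasure P]
    (κ : Zd 2 → Kernel (EnvSp 2) (Traj 2)) [∀ x, IsMarkovKernel (κ x)]
    (hκ : IsQuenched κ)
    (hC1 : CondC1 P) (R : ℝ) (hC2 : CondC2 P R) (hC3 : CondC3 P)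
    (ℓ : EuclideanSpace ℝ (Fin 2)) (hℓ : ‖ℓ‖ = 1)
    (hA : ann P κ 0 (Adir ℓ ∪ AdirNeg ℓ) = 1) :
    Tendsto (fun L : ℝ => ann P κ 0 (symmDiff (Bdir ℓ) (Gset ℓ 0 L))) atTop (𝓝 0) ∧
    Tendsto (fun L : ℝ => ann P κ 0 (Gset ℓ 0 L)) atTop (𝓝 (ann P κ 0 (Bdir ℓ))) := by
  classical
  set μ := ann P κ 0 with hμ
  have hprob : IsProbabilityMeasure μ := by
    constructor
    rw [hμ, ann, Measure.bind_apply MeasurableSet.univ (κ 0).measurable.aemeasurable]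
    simp
  have hDmeas : MeasurableSet (Adir ℓ ∪ AdirNeg ℓ) :=
    (RWRE.measurableSet_Adir ℓ).union (RWRE.measurableSet_AdirNeg ℓ)
  have hDc : μ (Adir ℓ ∪ AdirNeg ℓ)ᶜ = 0 := (prob_compl_eq_zero_iff hDmeas).mpr hA
  have main : Tendsto (fun L : ℝ => μ (symmDiff (Bdir ℓ) (Gset ℓ 0 L))) atTop (𝓝 0) := by
    rw [Filter.tendsto_iff_seq_tendsto]
    intro u hu
    set s : ℕ → Set (Traj 2) :=
      fun k => ⋃ j : ℕ, symmDiff (Bdir ℓ) (Gset ℓ 0 (max 1 (u (k + j)))) with hs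
    have hmeas : ∀ k, MeasurableSet (s k) := fun k =>
      MeasurableSet.iUnion fun j => (RWRE.measurableSet_Bdir ℓ).symmDiff
        (RWRE.measurableSet_Gset ℓ (lt_of_lt_of_le zero_lt_one (le_max_left _ _)))
    have hanti : Antitone s := by
      refine antitone_nat_of_succ_le fun k x hx => ?_
      simp only [hs, Set.mem_iUnion] at hx ⊢
      obtain ⟨j, hj⟩ := hx
      exact ⟨j + 1, by rw [show k + (j + 1) = k + 1 + j from by omega]; exact hj⟩
    have hinter : (⋂ k, s k) ⊆ (Adir ℓ ∪ AdirNeg ℓ)ᶜ := by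
      intro x hx
      by_contra hxD
      rw [Set.mem_compl_iff, not_not] at hxD
      obtain ⟨L₀, _, hL₀⟩ := RWRE.det_main hxD
      obtain ⟨k₀, hk₀⟩ := eventually_atTop.mp (hu.eventually_ge_atTop L₀)
      have hmem := Set.mem_iInter.mp hx k₀
      simp only [hs, Set.mem_iUnion] at hmem
      obtain ⟨j, hj⟩ := hmem
      have h1 : L₀ ≤ max 1 (u (k₀ + j)) :=
        le_trans (hk₀ _ (by omega)) (le_max_right _ _)
      exact hL₀ _ h1 hj
    have hzero : μ (⋂ k, s k) = 0 :=
      le_antisymm (le_trans (measure_mono hinter) hDc.le) zero_le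
    have htend := tendsto_measure_iInter_atTop (fun k => (hmeas k).nullMeasurableSet) hanti
      ⟨0, measure_ne_top μ _⟩
    rw [hzero] at htend
    have hbound : ∀ᶠ k in atTop,
        μ (symmDiff (Bdir ℓ) (Gset ℓ 0 (u k))) ≤ μ (s k) := by
      obtain ⟨k₁, hk₁⟩ := eventually_atTop.mp (hu.eventually_ge_atTop 1)
      refine eventually_atTop.mpr ⟨k₁, fun k hk => ?_⟩
      refine measure_mono fun x hx => ?_
      refine Set.mem_iUnion.mpr ⟨0, ?_⟩
      rw [show max 1 (u (k + 0)) = u k from by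
        rw [Nat.add_zero]; exact max_eq_right (hk₁ k hk)]
      exact hx
    exact tendsto_of_tendsto_of_tendsto_of_le_of_le' tendsto_const_nhds htend
      (Eventually.of_forall fun k => zero_le) hbound
  refine ⟨main, ?_⟩
  have hub : ∀ L : ℝ, μ (Gset ℓ 0 L) ≤ μ (Bdir ℓ) + μ (symmDiff (Bdir ℓ) (Gset ℓ 0 L)) := by
    intro L
    refine le_trans (measure_mono fun x hx => ?_) (measure_union_le _ _)
    by_cases hb : x ∈ Bdir ℓ
    · exact Or.inl hb
    · exact Or.inr (Set.mem_symmDiff.mpr (Or.inr ⟨hx, hb⟩))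
  have hlb : ∀ L : ℝ,
      μ (Bdir ℓ) - μ (symmDiff (Bdir ℓ) (Gset ℓ 0 L)) ≤ μ (Gset ℓ 0 L) := by
    intro L
    rw [tsub_le_iff_right]
    refine le_trans (measure_mono fun x hx => ?_) (measure_union_le _ _)
    by_cases hg : x ∈ Gset ℓ 0 L
    · exact Or.inl hg
    · exact Or.inr (Set.mem_symmDiff.mpr (Or.inl ⟨hx, hg⟩))
  have h1 : Tendsto (fun L : ℝ => μ (Bdir ℓ) - μ (symmDiff (Bdir ℓ) (Gset ℓ 0 L)))
      atTop (𝓝 (μ (Bdir ℓ))) := by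
    have := ((ENNReal.continuous_sub_left (measure_ne_top μ (Bdir ℓ))).tendsto 0).comp main
    simpa [Function.comp_def] using this
  have h2 : Tendsto (fun L : ℝ => μ (Bdir ℓ) + μ (symmDiff (Bdir ℓ) (Gset ℓ 0 L)))
      atTop (𝓝 (μ (Bdir ℓ))) := by
    have := Tendsto.add (tendsto_const_nhds (x := μ (Bdir ℓ)) (f := (atTop : Filter ℝ))) main
    simpa using this
  exact tendsto_of_tendsto_of_tendsto_of_le_of_le h1 h2 hlb hub
end
end

section
/- (Deterministic loop-erasure claim.) Let ℓ be a unit vector in ℝ², L > 0, and let X = (X_n)_{n≥0} be a sequence in ℤ² with T_{≥L}(X) < ∞. Suppose that X ∈ B_ℓ (i.e., some finite sequence of loop erasures removes every visit of X to the half-space {x · ℓ < 0}) but X ∉ G_0^L (i.e., no Y ∈ ℰ((X_n)_{n=0}^{T_{≥L}}) satisfies T_{≥L}(Y) < T_{<0}(Y)). Then there exist times 0 ≤ k < m < T_{≥L}(X) < n such that X_m · ℓ < 0 and X_k = X_n. -/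
open MeasureTheory ProbabilityTheory Filter Topology

noncomputable section

private lemma hitTime_le' {α : Type*} {A : Set α} {X : ℕ → α} {k : ℕ} (hk : X k ∈ A) :
    hitTime A X ≤ (k : ℕ∞) := iInf₂_le k hk

private lemma hitTime_eq_top_of {α : Type*} {A : Set α} {X : ℕ → α} (h : ∀ k, X k ∉ A) :
    hitTime A X = ⊤ :=
  iInf_eq_top.mpr fun k => iInf_eq_top.mpr fun hk => absurd hk (h k)

private lemma hitTime_eq_find {α : Type*} {A : Set α} {X : ℕ → α}
    [DecidablePred fun k => X k ∈ A] (h : ∃ k, X k ∈ A) :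
    hitTime A X = (Nat.find h : ℕ∞) := by
  refine le_antisymm (hitTime_le' (Nat.find_spec h)) (le_iInf₂ fun k hk => ?_)
  exact_mod_cast Nat.find_min' h hk

/-- Structure of loop erasures: `Y = X ∘ ψ` with `ψ` strictly monotone, and every maximal
gap `[a, b)` of the range of `ψ` has `X a = X b`. -/
private lemma erasure_structure {α : Type*} {X Y : ℕ → α} (h : Y ∈ LoopErasures X) :
    ∃ ψ : ℕ → ℕ, StrictMono ψ ∧ Y = X ∘ ψ ∧
      ∀ a b : ℕ, a < b → (a = 0 ∨ a - 1 ∈ Set.range ψ) →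
        (∀ i, a ≤ i → i < b → i ∉ Set.range ψ) → b ∈ Set.range ψ → X a = X b := by
  induction h with
  | refl =>
    exact ⟨id, strictMono_id, rfl, fun a b hab _ hgap _ =>
      absurd ⟨a, rfl⟩ (hgap a le_rfl hab)⟩
  | @tail V Y' h1 h2 ih =>
    obtain ⟨ψ, hψm, hbc, hI⟩ := ih
    obtain ⟨m, n, hmn, heq, hc⟩ := h2
    set φ : ℕ → ℕ := fun i => if i < m then i else i + (n - m) with hφ
    have hφm : StrictMono φ := by
      intro i j hij; simp only [hφ]; split_ifs <;> omega
    have hXmn : X (ψ m) = X (ψ n) := by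
      rw [hbc] at heq; exact heq
    refine ⟨ψ ∘ φ, hψm.comp hφm, ?_, ?_⟩
    · rw [hc, hbc]; funext i
      simp only [Function.comp, hφ]
      split_ifs <;> rfl
    · intro a b hab ha hgap hb
      have hmem : ∀ u, u ∈ Set.range (ψ ∘ φ) ↔ ∃ i, (i < m ∨ n ≤ i) ∧ ψ i = u := by
        intro u; constructor
        · rintro ⟨i, rfl⟩
          simp only [Function.comp, hφ]
          by_cases h : i < m
          · exact ⟨i, Or.inl h, by rw [if_pos h]⟩
          · exact ⟨i + (n - m), Or.inr (by omega), by rw [if_neg h]⟩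
        · rintro ⟨i, hi, rfl⟩
          rcases hi with hi | hi
          · exact ⟨i, by simp only [Function.comp_apply, hφ, if_pos hi]⟩
          · refine ⟨i - (n - m), ?_⟩
            simp only [Function.comp_apply, hφ]
            rw [if_neg (by omega)]
            congr 1; omega
      have hSS : ∀ u, u ∈ Set.range (ψ ∘ φ) → u ∈ Set.range ψ := by
        rintro u hu
        obtain ⟨i, _, rfl⟩ := (hmem u).mp hu
        exact ⟨i, rfl⟩
      by_cases hR : ∃ i, m ≤ i ∧ i < n ∧ a ≤ ψ i ∧ ψ i < b
      · obtain ⟨i, him, hin, hai, hib⟩ := hR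
        have haψm : a ≤ ψ m := by
          by_contra h; push_neg at h
          have ha' : a - 1 ∈ Set.range (ψ ∘ φ) := by
            rcases ha with h0 | h0
            · exact absurd h (by omega)
            · exact h0
          obtain ⟨i', hi', hψi'⟩ := (hmem _).mp ha'
          have hmi' : m ≤ i' := by
            have : ψ m ≤ ψ i' := by rw [hψi']; omega
            exact hψm.le_iff_le.mp this
          have hi'n : i' < n := by
            have h4 : ψ i' < ψ i := by rw [hψi']; omega
            have := hψm.lt_iff_lt.mp h4
            omega
          rcases hi' with h3 | h3 <;> omega
        have hψmb : ψ m < b := lt_of_le_of_lt (hψm.monotone him) hib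
        have hXaψm : X a = X (ψ m) := by
          rcases eq_or_lt_of_le haψm with h | h
          · rw [h]
          · refine hI a (ψ m) h ?_ ?_ ⟨m, rfl⟩
            · rcases ha with h0 | h0
              exacts [Or.inl h0, Or.inr (hSS _ h0)]
            · rintro u h1' h2' ⟨i', rfl⟩
              have h3 : i' < m := hψm.lt_iff_lt.mp h2'
              exact hgap _ h1' (lt_trans h2' hψmb) ((hmem _).mpr ⟨i', Or.inl h3, rfl⟩)
        have hψnb : ψ n = b := by
          obtain ⟨i'', hi'', hψi''⟩ := (hmem b).mp hb
          have hnb : ψ n ≤ b := by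
            by_contra h; push_neg at h
            have hii1 : i < i'' := hψm.lt_iff_lt.mp (by rw [hψi'']; exact hib)
            have hii2 : i'' < n := hψm.lt_iff_lt.mp (by rw [hψi'']; exact h)
            rcases hi'' with h3 | h3 <;> omega
          rcases eq_or_lt_of_le hnb with h | h
          · exact h
          · exact absurd ((hmem _).mpr ⟨n, Or.inr le_rfl, rfl⟩)
              (hgap _ (le_trans haψm (hψm.monotone (le_of_lt hmn))) h)
        rw [hXaψm, hXmn, hψnb]
      · refine hI a b hab ?_ ?_ (hSS b hb)
        · rcases ha with h | h
          exacts [Or.inl h, Or.inr (hSS _ h)]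
        · rintro i h1' h2' ⟨i', rfl⟩
          by_cases h3 : i' < m ∨ n ≤ i'
          · exact hgap _ h1' h2' ((hmem _).mpr ⟨i', h3, rfl⟩)
          · exact hR ⟨i', by omega, by omega, h1', h2'⟩

/-- Erasing a finite family of disjoint loops, given as a finite set `E` of indices that is
a union of loops with equal endpoint values. -/
private lemma multiErase {α : Type*} :
    ∀ (N : ℕ) (E : Finset ℕ) (W : ℕ → α), E.card ≤ N →
      (∀ j ∈ E, ∃ a b : ℕ, a ≤ j ∧ j < b ∧ W a = W b ∧
        (∀ i, a ≤ i → i < b → i ∈ E) ∧ b ∉ E ∧ (a = 0 ∨ a - 1 ∉ E)) →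
      ∃ (Z : ℕ → α) (ψ : ℕ → ℕ), Z ∈ LoopErasures W ∧ StrictMono ψ ∧
        Z = W ∘ ψ ∧ ∀ i, ψ i ∉ E := by
  intro N
  induction N with
  | zero =>
    intro E W hcard _
    have hE : E = ∅ := Finset.card_eq_zero.mp (le_antisymm hcard (Nat.zero_le _))
    exact ⟨W, id, Relation.ReflTransGen.refl, strictMono_id, rfl, by simp [hE]⟩
  | succ N ih =>
    intro E W hcard hE
    rcases E.eq_empty_or_nonempty with rfl | hne
    · exact ⟨W, id, Relation.ReflTransGen.refl, strictMono_id, rfl, by simp⟩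
    set j := E.max' hne with hj
    obtain ⟨a, b, haj, hjb, hWab, hsub, hbE, hlm⟩ := hE j (E.max'_mem hne)
    have hb : b = j + 1 := by
      have h1 : b - 1 ∈ E := hsub (b - 1) (by omega) (by omega)
      have h2 := E.le_max' _ h1
      omega
    set W' : ℕ → α := fun i => if i < a then W i else W (i + (b - a)) with hW'
    have hstep : EraseOne W W' := ⟨a, b, by omega, hWab, rfl⟩
    set E' : Finset ℕ := E.filter (· < a) with hE'
    have hE'mem : ∀ i, i ∈ E' ↔ i ∈ E ∧ i < a := by
      intro i; simp [hE']
    have hjE' : j ∉ E' := fun h => by have := ((hE'mem j).mp h).2; omega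
    have hcard' : E'.card ≤ N := by
      have hss : E' ⊂ E :=
        (Finset.ssubset_iff_of_subset (Finset.filter_subset _ _)).mpr
          ⟨j, E.max'_mem hne, hjE'⟩
      have := Finset.card_lt_card hss
      omega
    have hE'hyp : ∀ j' ∈ E', ∃ a' b' : ℕ, a' ≤ j' ∧ j' < b' ∧ W' a' = W' b' ∧
        (∀ i, a' ≤ i → i < b' → i ∈ E') ∧ b' ∉ E' ∧ (a' = 0 ∨ a' - 1 ∉ E') := by
      intro j' hj'
      obtain ⟨hj'E, hj'a⟩ := (hE'mem j').mp hj'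
      obtain ⟨a', b', ha'j', hj'b', hW'ab, hsub', hb'E, hlm'⟩ := hE j' hj'E
      have hb'a : b' ≤ a := by
        by_contra h; push_neg at h
        have ha1 : a - 1 ∈ E := hsub' (a - 1) (by omega) (by omega)
        rcases hlm with h0 | h0
        · omega
        · exact h0 ha1
      have he1 : W' a' = W a' := if_pos (by omega)
      have he2 : W' b' = W b' := by
        rcases lt_or_eq_of_le hb'a with h | h
        · exact if_pos h
        · subst h
          have : W' b' = W (b' + (b - b')) := if_neg (lt_irrefl _)
          rw [this]
          have hbb : b' + (b - b') = b := by omega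
          rw [hbb, ← hWab]
      refine ⟨a', b', ha'j', hj'b', by rw [he1, he2]; exact hW'ab, ?_, ?_, ?_⟩
      · intro i h1 h2
        exact (hE'mem i).mpr ⟨hsub' i h1 h2, by omega⟩
      · exact fun h => hb'E ((hE'mem b').mp h).1
      · rcases hlm' with h | h
        · exact Or.inl h
        · exact Or.inr fun hh => h ((hE'mem _).mp hh).1
    obtain ⟨Z, ψ', hZmem, hψ'm, hZc, hψ'E⟩ := ih E' W' hcard' hE'hyp
    set φ : ℕ → ℕ := fun u => if u < a then u else u + (b - a) with hφ
    have hφm : StrictMono φ := by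
      intro u v huv; simp only [hφ]; split_ifs <;> omega
    have hW'c : W' = W ∘ φ := by
      funext u; simp only [hW', hφ, Function.comp]
      split_ifs <;> rfl
    refine ⟨Z, φ ∘ ψ', Relation.ReflTransGen.head hstep hZmem, hφm.comp hψ'm, ?_, ?_⟩
    · rw [hZc, hW'c]; rfl
    · intro i
      have hu := hψ'E i
      simp only [Function.comp, hφ]
      split_ifs with h
      · exact fun hmem => hu ((hE'mem _).mpr ⟨hmem, h⟩)
      · intro hmem
        have h2 := E.le_max' _ hmem
        omega

/-- Deterministic loop-erasure claim: if `T_{≥L}(X) < ∞`, `X ∈ B_ℓ`, but `X ∉ G_0^L`,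
then there are times `0 ≤ k < m < T_{≥L}(X) < n` with `X_m · ℓ < 0` and `X_k = X_n`. -/
theorem loop_erasure_claim
    (ℓ : EuclideanSpace ℝ (Fin 2)) (hℓ : ‖ℓ‖ = 1) (L : ℝ) (hL : 0 < L)
    (X : Traj 2) (hT : Tge ℓ L X ≠ ⊤)
    (hB : X ∈ Bdir ℓ) (hG : X ∉ Gset ℓ 0 L) :
    ∃ k m n : ℕ, k < m ∧ (m : ℕ∞) < Tge ℓ L X ∧ Tge ℓ L X < (n : ℕ∞) ∧
      dotl (X m) ℓ < 0 ∧ X k = X n := by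
  classical
  have hexT : ∃ k, X k ∈ {x : Zd 2 | L ≤ dotl x ℓ} := by
    by_contra h; push_neg at h; exact hT (hitTime_eq_top_of h)
  set t := Nat.find hexT with ht
  have hTeq : Tge ℓ L X = (t : ℕ∞) := hitTime_eq_find hexT
  have hXt : L ≤ dotl (X t) ℓ := Nat.find_spec hexT
  obtain ⟨Y, hYmem, hYtop⟩ := hB
  obtain ⟨ψ, hψm, hYc, hI⟩ := erasure_structure hYmem
  set S : Set ℕ := Set.range ψ with hS
  have hclean : ∀ s ∈ S, 0 ≤ dotl (X s) ℓ := by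
    rintro s ⟨i, rfl⟩
    by_contra h; push_neg at h
    have h1 : Tlt ℓ 0 Y ≤ (i : ℕ∞) :=
      hitTime_le' (show dotl (Y i) ℓ < 0 by rw [hYc]; exact h)
    rw [hYtop] at h1
    exact absurd h1 (by simp)
  have hex : ∀ j : ℕ, ∃ s, j < s ∧ s ∈ S := fun j =>
    ⟨ψ (j + 1), lt_of_lt_of_le (Nat.lt_succ_self j) hψm.le_apply, ⟨j + 1, rfl⟩⟩
  set Bf : ℕ → ℕ := fun j => Nat.find (hex j) with hBf
  have hBspec : ∀ j, j < Bf j ∧ Bf j ∈ S := fun j => Nat.find_spec (hex j)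
  have hBmin : ∀ j s, j < s → s ∈ S → Bf j ≤ s := fun j s h1 h2 =>
    Nat.find_min' (hex j) ⟨h1, h2⟩
  have hBgap : ∀ j i, j < i → i < Bf j → i ∉ S := fun j i h1 h2 hi =>
    Nat.find_min (hex j) h2 ⟨h1, hi⟩
  have hexA : ∀ j : ℕ, ∃ a, ∀ i, a ≤ i → i ≤ j → i ∉ S := fun j =>
    ⟨j + 1, fun i h1 h2 => absurd (h1.trans h2) (by omega)⟩
  set Af : ℕ → ℕ := fun j => Nat.find (hexA j) with hAf
  have hAspec : ∀ j i, Af j ≤ i → i ≤ j → i ∉ S := fun j => Nat.find_spec (hexA j)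
  have hAle : ∀ j, j ∉ S → Af j ≤ j := fun j hj =>
    Nat.find_min' (hexA j) fun i h1 h2 => by
      have : i = j := le_antisymm h2 h1
      rwa [this]
  have hAlm : ∀ j, Af j = 0 ∨ Af j - 1 ∈ S := by
    intro j
    rcases Nat.eq_zero_or_pos (Af j) with h | h
    · exact Or.inl h
    · right
      have h2 : ¬ ∀ i, Af j - 1 ≤ i → i ≤ j → i ∉ S := Nat.find_min (hexA j) (Nat.sub_lt h Nat.one_pos)
      push_neg at h2
      obtain ⟨i, hi1, hi2, hi3⟩ := h2
      have hieq : i = Af j - 1 := by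
        by_contra hne
        exact hAspec j i (by omega) hi2 hi3
      rwa [← hieq]
  have hgapA : ∀ j, ∀ i, Af j ≤ i → i < Bf j → i ∉ S := by
    intro j i h1 h2
    rcases le_or_gt i j with h | h
    · exact hAspec j i h1 h
    · exact hBgap j i h h2
  have hloopAB : ∀ j, j ∉ S → X (Af j) = X (Bf j) := fun j hj =>
    hI (Af j) (Bf j) (lt_of_le_of_lt (hAle j hj) (hBspec j).1) (hAlm j)
      (hgapA j) (hBspec j).2
  by_cases hcase : ∃ j, j < t ∧ j ∉ S ∧ dotl (X j) ℓ < 0 ∧ t < Bf j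
  · obtain ⟨j, hjt, hjS, hjneg, hjB⟩ := hcase
    refine ⟨Af j, j, Bf j, ?_, ?_, ?_, hjneg, hloopAB j hjS⟩
    · rcases lt_or_eq_of_le (hAle j hjS) with h | h
      · exact h
      · exfalso
        have hcl := hclean (Bf j) (hBspec j).2
        rw [← hloopAB j hjS, h] at hcl
        exact absurd hjneg (not_lt.mpr hcl)
    · rw [hTeq]; exact_mod_cast hjt
    · rw [hTeq]; exact_mod_cast hjB
  · push_neg at hcase
    exfalso
    set W := stopped X (Tge ℓ L X) with hWdef
    have hW : ∀ i : ℕ, W i = if i < t then X i else X t := by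
      intro i
      rw [hWdef, stopped, hTeq]
      simp only [Nat.cast_lt, ENat.toNat_coe]
    have hWle : ∀ i, i ≤ t → W i = X i := by
      intro i h
      rw [hW]
      rcases lt_or_eq_of_le h with h' | h'
      · rw [if_pos h']
      · rw [h']; simp
    set E : Finset ℕ := (Finset.range t).filter (fun j => j ∉ S ∧ Bf j ≤ t) with hE
    have hEmem : ∀ j, j ∈ E ↔ j < t ∧ j ∉ S ∧ Bf j ≤ t := by
      intro j; simp [hE, Finset.mem_filter, Finset.mem_range, and_assoc]
    have hEhyp : ∀ j ∈ E, ∃ a b : ℕ, a ≤ j ∧ j < b ∧ W a = W b ∧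
        (∀ i, a ≤ i → i < b → i ∈ E) ∧ b ∉ E ∧ (a = 0 ∨ a - 1 ∉ E) := by
      intro j hj
      obtain ⟨hjt, hjS, hjB⟩ := (hEmem j).mp hj
      refine ⟨Af j, Bf j, hAle j hjS, (hBspec j).1, ?_, ?_, ?_, ?_⟩
      · rw [hWle _ (le_trans (hAle j hjS) (le_of_lt hjt)), hWle _ hjB]
        exact hloopAB j hjS
      · intro i h1 h2
        refine (hEmem i).mpr ⟨by omega, hgapA j i h1 h2, ?_⟩
        exact le_trans (hBmin i (Bf j) h2 (hBspec j).2) hjB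
      · exact fun hmem => ((hEmem _).mp hmem).2.1 (hBspec j).2
      · rcases hAlm j with h | h
        · exact Or.inl h
        · exact Or.inr fun hmem => ((hEmem _).mp hmem).2.1 h
    obtain ⟨Z, ψ₀, hZmem, hψ₀m, hZc, hψ₀E⟩ := multiErase E.card E W le_rfl hEhyp
    have hZclean : ∀ i, ¬ dotl (Z i) ℓ < 0 := by
      intro i
      rw [hZc]
      simp only [Function.comp]
      have huE := hψ₀E i
      rcases lt_or_ge (ψ₀ i) t with h | h
      · rw [hWle _ (le_of_lt h)]
        by_cases hus : ψ₀ i ∈ S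
        · exact not_lt.mpr (hclean _ hus)
        · intro hneg
          exact huE ((hEmem _).mpr ⟨h, hus, hcase _ h hus hneg⟩)
      · rw [hW, if_neg (not_lt.mpr h)]
        exact not_lt.mpr (le_trans (le_of_lt hL) hXt)
    have hZtop : Tlt ℓ 0 Z = ⊤ := hitTime_eq_top_of fun k => hZclean k
    have hZge : Tge ℓ L Z ≤ (t : ℕ∞) := by
      refine hitTime_le' (show L ≤ dotl (Z t) ℓ from ?_)
      rw [hZc]
      simp only [Function.comp]
      rw [hW, if_neg (not_lt.mpr hψ₀m.le_apply)]
      exact hXt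
    apply hG
    have hGs : Gset ℓ 0 L = {X | Tge ℓ L X ≠ ⊤ ∧
        ∃ Y ∈ LoopErasures (stopped X (Tge ℓ L X)), Tge ℓ L Y < Tlt ℓ 0 Y} := by
      rw [Gset, if_pos hL]
    rw [hGs]
    refine ⟨hT, Z, hZmem, ?_⟩
    rw [hZtop]
    exact lt_of_le_of_lt hZge (by simp)
end
end

section
/- (Geometric lemma.) Fix a unit vector ℓ ∈ ℝ^d, h > 0, and real numbers L' > L > 0. Then there is a neighborhood of ℓ in the unit sphere S^{d−1} such that for every unit vector v in this neighborhood and every x ∈ ℝ^d satisfying x · ℓ ≥ L' and x · v ≤ L, there exists a unit vector ℓ^⊥ perpendicular to ℓ with x · ℓ^⊥ > h. -/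
set_option maxHeartbeats 1000000


open scoped InnerProductSpace

/-- Geometric lemma (Lemma 3.5 of the paper): for a unit vector `ℓ`, `h > 0`, and
`L' > L > 0`, every unit vector `v` sufficiently close to `ℓ` has the property that
any `x` with `x · ℓ ≥ L'` and `x · v ≤ L` satisfies `x · ℓ^⊥ > h` for some unit
vector `ℓ^⊥` perpendicular to `ℓ`. -/
theorem geometric_lemma {d : ℕ} (ℓ : EuclideanSpace ℝ (Fin d)) (hℓ : ‖ℓ‖ = 1)
    (h : ℝ) (hh : 0 < h) (L L' : ℝ) (hL : 0 < L) (hLL' : L < L') :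
    ∃ ε > 0, ∀ v : EuclideanSpace ℝ (Fin d), ‖v‖ = 1 → ‖v - ℓ‖ < ε →
      ∀ x : EuclideanSpace ℝ (Fin d), L' ≤ ⟪x, ℓ⟫_ℝ → ⟪x, v⟫_ℝ ≤ L →
        ∃ lp : EuclideanSpace ℝ (Fin d), ‖lp‖ = 1 ∧ ⟪lp, ℓ⟫_ℝ = 0 ∧ h < ⟪x, lp⟫_ℝ := by
  have hL' : 0 < L' := hL.trans hLL'
  set δ : ℝ := min 1 (min (Real.sqrt ((L' - L) / L')) ((L' - L) / (4 * h))) with hδdef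
  have hfrac : 0 < (L' - L) / L' := div_pos (by linarith) hL'
  have hδpos : 0 < δ := by
    refine lt_min (by norm_num) (lt_min (Real.sqrt_pos.2 hfrac) (div_pos (by linarith) (by linarith)))
  have hδ1 : δ ≤ 1 := min_le_left _ _
  have hδsq : L' * δ ^ 2 / 2 ≤ (L' - L) / 2 := by
    have h1 : δ ≤ Real.sqrt ((L' - L) / L') := le_trans (min_le_right _ _) (min_le_left _ _)
    have h2 : δ ^ 2 ≤ (L' - L) / L' := by
      have := Real.sq_sqrt hfrac.le
      nlinarith [hδpos.le]
    have h3 : L' * δ ^ 2 ≤ L' - L := by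
      have := mul_le_mul_of_nonneg_left h2 hL'.le
      rwa [mul_div_cancel₀ _ (ne_of_gt hL')] at this
    linarith
  have hδh : δ ≤ (L' - L) / (4 * h) := le_trans (min_le_right _ _) (min_le_right _ _)
  refine ⟨δ, hδpos, fun v hv hvℓ x hxℓ hxv => ?_⟩
  set a : ℝ := ⟪x, ℓ⟫_ℝ with ha
  set y : EuclideanSpace ℝ (Fin d) := x - a • ℓ with hy
  have hℓ2 : ⟪ℓ, ℓ⟫_ℝ = 1 := by
    rw [real_inner_self_eq_norm_sq, hℓ]; norm_num
  have hyℓ : ⟪y, ℓ⟫_ℝ = 0 := by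
    rw [hy, inner_sub_left, real_inner_smul_left, hℓ2]; ring
  -- inner product of ℓ and v
  have hlv : ⟪ℓ, v⟫_ℝ = 1 - ‖v - ℓ‖ ^ 2 / 2 := by
    have := @norm_sub_sq_real (EuclideanSpace ℝ (Fin d)) _ _ v ℓ
    rw [hv, hℓ, real_inner_comm] at this
    linarith
  -- decomposition of ⟪x, v⟫
  have hℓy : ⟪ℓ, y⟫_ℝ = 0 := by rw [real_inner_comm]; exact hyℓ
  have hdecomp : ⟪x, v⟫_ℝ = a * ⟪ℓ, v⟫_ℝ + ⟪y, v - ℓ⟫_ℝ := by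
    simp only [hy, inner_sub_left, inner_sub_right, real_inner_smul_left, hℓ2]
    rw [← ha]
    ring
  have hyv : -(‖y‖ * ‖v - ℓ‖) ≤ ⟪y, v - ℓ⟫_ℝ := by
    have := abs_real_inner_le_norm y (v - ℓ)
    have := neg_abs_le (⟪y, v - ℓ⟫_ℝ)
    linarith
  have hs0 : (0:ℝ) ≤ ‖v - ℓ‖ := norm_nonneg _
  have haL' : L' ≤ a := hxℓ
  -- key lower bound: ‖y‖ * δ ≥ (L' - L)/2
  have hkey : (L' - L) / 2 ≤ ‖y‖ * δ := by
    have hlv2 : 1 - δ ^ 2 / 2 ≤ ⟪ℓ, v⟫_ℝ := by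
      rw [hlv]
      nlinarith [hvℓ, hs0]
    have hlv3 : (0:ℝ) ≤ 1 - δ ^ 2 / 2 := by nlinarith
    have ha0 : 0 < a := lt_of_lt_of_le hL' haL'
    have h1 : L' * (1 - δ ^ 2 / 2) ≤ a * ⟪ℓ, v⟫_ℝ := by
      calc L' * (1 - δ ^ 2 / 2) ≤ a * (1 - δ ^ 2 / 2) :=
              mul_le_mul_of_nonneg_right haL' hlv3
        _ ≤ a * ⟪ℓ, v⟫_ℝ := mul_le_mul_of_nonneg_left hlv2 ha0.le
    have h2 : ‖y‖ * ‖v - ℓ‖ ≤ ‖y‖ * δ :=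
      mul_le_mul_of_nonneg_left hvℓ.le (norm_nonneg _)
    have := hxv
    rw [hdecomp] at this
    nlinarith
  have hynorm : 2 * h ≤ ‖y‖ := by
    have h4 : 2 * h * δ ≤ (L' - L) / 2 := by
      have := (le_div_iff₀ (by linarith : (0:ℝ) < 4 * h)).mp hδh
      nlinarith
    have := le_trans h4 hkey
    exact le_of_mul_le_mul_right (by linarith) hδpos
  have hyn0 : (0:ℝ) < ‖y‖ := lt_of_lt_of_le (by linarith) hynorm
  refine ⟨‖y‖⁻¹ • y, ?_, ?_, ?_⟩
  · rw [norm_smul, norm_inv, norm_norm, inv_mul_cancel₀ (ne_of_gt hyn0)]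
  · rw [real_inner_smul_left, hyℓ]; ring
  · have hxy : ⟪x, y⟫_ℝ = ‖y‖ ^ 2 := by
      have : x = y + a • ℓ := by rw [hy]; abel
      rw [this]
      simp only [inner_add_left, real_inner_smul_left, hℓy, real_inner_self_eq_norm_sq]
      ring
    rw [real_inner_smul_right, hxy]
    rw [pow_two, inv_mul_cancel_left₀ (ne_of_gt hyn0)]
    linarith
end
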